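/- arXiv:2509.12907 — 8 statements merged into one kernel-verified Lean document; each statement's English description precedes it below -/
import Mathlib

section
/- Let Assumption 1 hold and assume moreover that f is λ-strongly convex on the closed ball B̄(x*, δ) for some δ, λ > 0. For s > 0 and x ∈ ℝ^d, let P_s(x) denote the unique minimizer over B̄(x*, δ) of y ↦ f(y) + ‖y − x‖²/(2s) (it is unique by strong convexity). Let γ > 0, let t ↦ γ_t be a continuous function with γ_t ≥ γ/2 for all t ≥ 0, let r : [0,∞) → ℝ^d be continuous, let α > 0, and set c1 := 1/(1 + 2/(λγ)). If y : [0,∞) → ℝ^d is differentiable and satisfies ẏ_t = P_{γ_t}(y_t) − y_t + r_t/α for all t ≥ 0, then for all t ≥ 0: ‖y_t − x*‖² ≤ e^{−c1 t} ‖y_0 − x*‖² + (1/c1) ∫_0^t (‖r_s‖²/α²) e^{−c1(t−s)} ds. -/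
open MeasureTheory Real Set

-- Clipping operator `clip_R`.
open Classical in
noncomputable def clipR {d : ℕ} (R : ℝ) (x : EuclideanSpace ℝ (Fin d)) : EuclideanSpace ℝ (Fin d) :=
  if x = 0 then 0 else (min R ‖x‖ / ‖x‖) • x

/-- Consensus point `θ_α(ρ)` of a measure `ρ`. -/
noncomputable def thetaAlpha {d : ℕ} (α : ℝ) (f : EuclideanSpace ℝ (Fin d) → ℝ)
    (ρ : Measure (EuclideanSpace ℝ (Fin d))) : EuclideanSpace ℝ (Fin d) :=
  (∫ y, Real.exp (-α * f y) ∂ρ)⁻¹ • ∫ y, Real.exp (-α * f y) • y ∂ρ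

/-- Gaussian measure on `ℝ^d` with mean `m` and covariance `σ2 • I_d`. -/
noncomputable def gaussianE (d : ℕ) (m : EuclideanSpace ℝ (Fin d)) (σ2 : ℝ) :
    Measure (EuclideanSpace ℝ (Fin d)) :=
  volume.withDensity fun y =>
    ENNReal.ofReal ((2 * Real.pi * σ2) ^ (-(d : ℝ) / 2) * Real.exp (-‖y - m‖ ^ 2 / (2 * σ2)))

open scoped RealInnerProductSpace

section Helpers

variable {E : Type*} [NormedAddCommGroup E] [InnerProductSpace ℝ E]

lemma comb_norm_sq (a b : E) (t : ℝ) :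
    ‖(1 - t) • a + t • b‖ ^ 2
      = (1 - t) * ‖a‖ ^ 2 + t * ‖b‖ ^ 2 - t * (1 - t) * ‖a - b‖ ^ 2 := by
  have h1 := norm_add_sq_real ((1 - t) • a) (t • b)
  have h2 := norm_sub_sq_real a b
  simp only [norm_smul, Real.norm_eq_abs, mul_pow, sq_abs, real_inner_smul_left,
    real_inner_smul_right] at h1
  nlinarith [h1, h2]

lemma lin_convexOn {S : Set E} (hS : Convex ℝ S) (a : ℝ) (w : E) :
    ConvexOn ℝ S (fun y => a + ⟪y, w⟫) := by
  refine ⟨hS, ?_⟩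
  intro x hx y hy pp q hpp hq hpq
  simp only [inner_add_left, real_inner_smul_left, smul_eq_mul]
  apply le_of_eq
  linear_combination (-a) * hpq

lemma sc_min {S : Set E} (hS : Convex ℝ S) {G : E → ℝ} {μ : ℝ} (hμ : 0 < μ)
    (hG : ConvexOn ℝ S (fun y => G y - μ / 2 * ‖y‖ ^ 2)) {P z : E} (hP : P ∈ S) (hz : z ∈ S)
    (hmin : ∀ y ∈ S, G P ≤ G y) : G P + μ / 2 * ‖z - P‖ ^ 2 ≤ G z := by
  have hD : 0 ≤ G z - G P := by linarith [hmin z hz]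
  have key : ∀ t : ℝ, 0 < t → t < 1 → (1 - t) * (μ / 2 * ‖z - P‖ ^ 2) ≤ G z - G P := by
    intro t ht0 ht1
    have hw : (1 - t) • P + t • z ∈ S := hS hP hz (by linarith) ht0.le (by ring)
    have hcv := hG.2 hP hz (by linarith : (0:ℝ) ≤ 1 - t) ht0.le (by ring)
    have hGw := hmin _ hw
    have hnorm := comb_norm_sq P z t
    rw [norm_sub_rev P z] at hnorm
    simp only [smul_eq_mul] at hcv
    nlinarith [hcv, hGw, hnorm, ht0, ht1]
  by_contra h
  push_neg at h
  set c := μ / 2 * ‖z - P‖ ^ 2 with hc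
  have hcD : G z - G P < c := by linarith
  have hc0 : 0 < c := lt_of_le_of_lt hD hcD
  have ht := key ((c - (G z - G P)) / (2 * c))
    (div_pos (by linarith) (by linarith))
    (by rw [div_lt_one (by linarith)]; linarith)
  have h2 : (c - (G z - G P)) / (2 * c) * c = (c - (G z - G P)) / 2 := by
    field_simp
  rw [sub_mul, one_mul, h2] at ht
  linarith

lemma prox_inner_bound {f : E → ℝ} {xstar : E} (hfmin : ∀ x, f xstar ≤ f x)
    {δ lam : ℝ} (hδ : 0 < δ) (hlam : 0 < lam)
    (hconv : ConvexOn ℝ (Metric.closedBall xstar δ) (fun y => f y - lam / 2 * ‖y‖ ^ 2))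
    {s : ℝ} (hs : 0 < s) (x : E) {P : E} (hPmem : P ∈ Metric.closedBall xstar δ)
    (hPmin : ∀ z ∈ Metric.closedBall xstar δ,
      f P + ‖P - x‖ ^ 2 / (2 * s) ≤ f z + ‖z - x‖ ^ 2 / (2 * s)) :
    ⟪x - xstar, P - xstar⟫ ≤ ‖x - xstar‖ ^ 2 / (1 + lam * s) := by
  have hxs : xstar ∈ Metric.closedBall xstar δ := Metric.mem_closedBall_self hδ.le
  set μ : ℝ := lam + 1 / s with hμdef
  have hμ : 0 < μ := by positivity
  have hGw : ∀ w : E, ConvexOn ℝ (Metric.closedBall xstar δ)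
      (fun y => (f y + ‖y - w‖ ^ 2 / (2 * s)) - μ / 2 * ‖y‖ ^ 2) := by
    intro w
    have heq : (fun y => (f y + ‖y - w‖ ^ 2 / (2 * s)) - μ / 2 * ‖y‖ ^ 2)
        = fun y => (f y - lam / 2 * ‖y‖ ^ 2) + (‖w‖ ^ 2 / (2 * s) + ⟪y, (-(1 / s)) • w⟫) := by
      funext y
      have hn := norm_sub_sq_real y w
      rw [real_inner_smul_right, hμdef, hn]
      field_simp
      ring
    rw [heq]
    exact hconv.add (lin_convexOn hconv.1 _ _)
  have h1 := sc_min hconv.1 hμ (hGw x) hPmem hxs hPmin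
  have h2 : ∀ z ∈ Metric.closedBall xstar δ,
      f xstar + ‖xstar - xstar‖ ^ 2 / (2 * s) ≤ f z + ‖z - xstar‖ ^ 2 / (2 * s) := by
    intro z hz
    have h0 : (0:ℝ) ≤ ‖z - xstar‖ ^ 2 / (2 * s) := by positivity
    rw [sub_self, norm_zero]
    norm_num
    linarith [hfmin z]
  have h2' := sc_min hconv.1 hμ (hGw xstar) hxs hPmem h2
  set u : E := P - xstar with hu
  set v : E := x - xstar with hv
  have hPx : P - x = u - v := by rw [hu, hv]; abel
  have hn1 := norm_sub_sq_real u v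
  rw [hPx, hn1] at h1
  rw [norm_sub_rev xstar x] at h1
  rw [norm_sub_rev xstar P] at h1
  rw [sub_self, norm_zero] at h2'
  set k : ℝ := (2 * s)⁻¹ with hk
  have hk0 : 0 < k := by rw [hk]; positivity
  have hks : 2 * s * k = 1 := by rw [hk]; field_simp
  have h1s : 1 / s = 2 * k := by rw [hk]; rw [eq_comm, mul_inv_eq_iff_eq_mul₀ (by positivity)]
                                 field_simp
  have hmul : ∀ X : ℝ, X / (2 * s) = X * k := fun X => by rw [hk, div_eq_mul_inv]
  rw [hmul, hmul, hμdef, h1s] at h1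
  rw [hmul, hmul, hμdef, h1s] at h2'
  norm_num at h2'
  have hsum2 : lam * ‖u‖ ^ 2 + 2 * k * ‖u‖ ^ 2 ≤ 2 * ⟪u, v⟫ * k := by nlinarith [h1, h2']
  have hmul2 := mul_le_mul_of_nonneg_right hsum2 hs.le
  have e1 : 2 * k * ‖u‖ ^ 2 * s = ‖u‖ ^ 2 := by linear_combination ‖u‖ ^ 2 * hks
  have e2 : 2 * ⟪u, v⟫ * k * s = ⟪u, v⟫ := by linear_combination ⟪u, v⟫ * hks
  have hkey : (1 + lam * s) * ‖u‖ ^ 2 ≤ ⟪u, v⟫ := by nlinarith [hmul2, e1, e2]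
  have hpos : (0:ℝ) < 1 + lam * s := by positivity
  rw [real_inner_comm, le_div_iff₀ hpos]
  have hB := real_inner_le_norm u v
  nlinarith [hkey, mul_le_mul_of_nonneg_left hB hpos.le,
    mul_le_mul_of_nonneg_left hkey hpos.le, sq_nonneg (‖v‖ - (1 + lam * s) * ‖u‖)]

set_option maxHeartbeats 1000000 in
theorem stmt4_aux {d : ℕ}
    (f : EuclideanSpace ℝ (Fin d) → ℝ) (xstar : EuclideanSpace ℝ (Fin d))
    (κ β : ℝ) (hκ : 0 < κ) (hβ : 1 ≤ β)
    (hgrowth : ∀ x, f xstar + κ / 2 * ‖x - xstar‖ ^ β ≤ f x)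
    (δ lam : ℝ) (hδ : 0 < δ) (hlam : 0 < lam)
    (hconv : ConvexOn ℝ (Metric.closedBall xstar δ) (fun y => f y - lam / 2 * ‖y‖ ^ 2))
    (p : ℝ → EuclideanSpace ℝ (Fin d) → EuclideanSpace ℝ (Fin d))
    (hp : ∀ s : ℝ, 0 < s → ∀ x, p s x ∈ Metric.closedBall xstar δ ∧
      ∀ y ∈ Metric.closedBall xstar δ,
        f (p s x) + ‖p s x - x‖ ^ 2 / (2 * s) ≤ f y + ‖y - x‖ ^ 2 / (2 * s))
    (γ : ℝ) (hγ : 0 < γ)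
    (γt : ℝ → ℝ) (hγt' : ∀ t : ℝ, 0 ≤ t → γ / 2 ≤ γt t)
    (r : ℝ → EuclideanSpace ℝ (Fin d)) (hr : ContinuousOn r (Set.Ici 0))
    (α : ℝ) (hα : 0 < α)
    (y : ℝ → EuclideanSpace ℝ (Fin d))
    (hy : ∀ t : ℝ, 0 ≤ t → HasDerivAt y (p (γt t) (y t) - y t + α⁻¹ • r t) t) :
    ∀ t : ℝ, 0 ≤ t →
      ‖y t - xstar‖ ^ 2
        ≤ Real.exp (-(1 + 2 / (lam * γ))⁻¹ * t) * ‖y 0 - xstar‖ ^ 2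
          + ((1 + 2 / (lam * γ))⁻¹)⁻¹
            * ∫ s in (0:ℝ)..t, ‖r s‖ ^ 2 / α ^ 2
                * Real.exp (-(1 + 2 / (lam * γ))⁻¹ * (t - s)) := by
  have hlg : (0:ℝ) < lam * γ := mul_pos hlam hγ
  set c : ℝ := (1 + 2 / (lam * γ))⁻¹ with hc
  have hcden : (0:ℝ) < 1 + 2 / (lam * γ) := by positivity
  have hc0 : 0 < c := inv_pos.mpr hcden
  have hc_eq : c = lam * γ / (lam * γ + 2) := by
    rw [hc, show (1 + 2 / (lam * γ)) = (lam * γ + 2) / (lam * γ) by field_simp, inv_div]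
  have hfmin : ∀ x, f xstar ≤ f x := by
    intro x
    have h0 : (0:ℝ) ≤ κ / 2 * ‖x - xstar‖ ^ β := by positivity
    linarith [hgrowth x]
  -- the key differential inequality
  have hkey : ∀ x : ℝ, 0 ≤ x →
      c * ‖y x - xstar‖ ^ 2
          + 2 * ⟪y x - xstar, p (γt x) (y x) - y x + α⁻¹ • r x⟫
        ≤ c⁻¹ * (‖r x‖ ^ 2 / α ^ 2) := by
    intro x hx
    set s : ℝ := γt x with hsdef
    have hs0 : 0 < s := lt_of_lt_of_le (by positivity) (hγt' x hx)
    have hpos : (0:ℝ) < 1 + lam * s := by positivity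
    obtain ⟨hPmem, hPmin⟩ := hp s hs0 (y x)
    set P : EuclideanSpace ℝ (Fin d) := p s (y x) with hP
    have hI := prox_inner_bound hfmin hδ hlam hconv hs0 (y x) hPmem hPmin
    have hI' : ⟪y x - xstar, P - xstar⟫ * (1 + lam * s) ≤ ‖y x - xstar‖ ^ 2 :=
      (le_div_iff₀ hpos).mp hI
    have hfrac : c * (1 + lam * s) ≤ lam * s := by
      rw [hc_eq, div_mul_eq_mul_div, div_le_iff₀ (by positivity)]
      nlinarith [mul_le_mul_of_nonneg_left (hγt' x hx) hlam.le]
    have hIc : ⟪y x - xstar, P - xstar⟫ ≤ (1 - c) * ‖y x - xstar‖ ^ 2 := by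
      have hfrac2 : ‖y x - xstar‖ ^ 2 / (1 + lam * s) ≤ (1 - c) * ‖y x - xstar‖ ^ 2 := by
        rw [div_le_iff₀ hpos]
        nlinarith [mul_le_mul_of_nonneg_right hfrac (sq_nonneg ‖y x - xstar‖)]
      exact hI.trans hfrac2
    have hsplit : ⟪y x - xstar, P - y x + α⁻¹ • r x⟫
        = ⟪y x - xstar, P - xstar⟫ - ‖y x - xstar‖ ^ 2 + α⁻¹ * ⟪y x - xstar, r x⟫ := by
      rw [show P - y x + α⁻¹ • r x = (P - xstar) - (y x - xstar) + α⁻¹ • r x by abel]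
      rw [inner_add_right, inner_sub_right, real_inner_smul_right,
        real_inner_self_eq_norm_sq]
    rw [hsplit]
    have hCS := real_inner_le_norm (y x - xstar) (r x)
    have hcc : c * c⁻¹ = 1 := mul_inv_cancel₀ hc0.ne'
    have hαα : α * α⁻¹ = 1 := mul_inv_cancel₀ hα.ne'
    have h4 := sq_nonneg (c * ‖y x - xstar‖ - ‖r x‖ * α⁻¹)
    have hstep : 2 * α⁻¹ * ⟪y x - xstar, r x⟫ ≤ c * ‖y x - xstar‖ ^ 2
        + c⁻¹ * (‖r x‖ ^ 2 / α ^ 2) := by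
      have hgoal : 2 * c * α⁻¹ * ⟪y x - xstar, r x⟫
          ≤ c ^ 2 * ‖y x - xstar‖ ^ 2 + ‖r x‖ ^ 2 * α⁻¹ ^ 2 := by
        nlinarith [h4, mul_le_mul_of_nonneg_left hCS
          (by positivity : (0:ℝ) ≤ 2 * c * α⁻¹)]
      have hdiv : ‖r x‖ ^ 2 / α ^ 2 = ‖r x‖ ^ 2 * α⁻¹ ^ 2 := by
        rw [div_eq_mul_inv, inv_pow]
      rw [hdiv]
      have hmm := mul_le_mul_of_nonneg_left hgoal (inv_pos.mpr hc0).le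
      have hA : c⁻¹ * (2 * c * α⁻¹ * ⟪y x - xstar, r x⟫)
          = 2 * α⁻¹ * ⟪y x - xstar, r x⟫ := by
        linear_combination (2 * α⁻¹ * ⟪y x - xstar, r x⟫) * hcc
      have hB2 : c⁻¹ * (c ^ 2 * ‖y x - xstar‖ ^ 2 + ‖r x‖ ^ 2 * α⁻¹ ^ 2)
          = c * ‖y x - xstar‖ ^ 2 + c⁻¹ * (‖r x‖ ^ 2 * α⁻¹ ^ 2) := by
        linear_combination (c * ‖y x - xstar‖ ^ 2) * hcc
      rw [hA, hB2] at hmm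
      exact hmm
    linarith [hIc, hstep]
  intro t ht
  rcases eq_or_lt_of_le ht with h0 | ht0
  · rw [← h0]
    simp
  set g : ℝ → ℝ := fun τ => Real.exp (c * τ) * (‖r τ‖ ^ 2 / α ^ 2) with hgdef
  have hgcont : ContinuousOn g (Ici 0) := by
    apply ContinuousOn.mul
    · exact (Real.continuous_exp.comp (continuous_const.mul continuous_id)).continuousOn
    · exact (hr.norm.pow 2).div_const _
  set F : ℝ → ℝ := fun τ => ∫ σ in (0:ℝ)..τ, g σ with hFdef
  set W : ℝ → ℝ := fun τ => Real.exp (c * τ) * ‖y τ - xstar‖ ^ 2 - c⁻¹ * F τ with hWdef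
  have hVcont : ContinuousOn (fun τ => ‖y τ - xstar‖ ^ 2) (Icc 0 t) := fun τ hτ =>
    (((hy τ hτ.1).continuousAt.sub continuousAt_const).norm.pow 2).continuousWithinAt
  have hInt : IntegrableOn g (Icc 0 t) := (hgcont.mono Icc_subset_Ici_self).integrableOn_Icc
  have hFcont : ContinuousOn F (Icc 0 t) := by
    have h := intervalIntegral.continuousOn_primitive_interval (a := (0:ℝ)) (b := t)
      (μ := volume) (f := g) (by rw [uIcc_of_le ht]; exact hInt)
    rwa [uIcc_of_le ht] at h
  have hWcont : ContinuousOn W (Icc 0 t) :=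
    (((Real.continuous_exp.comp (continuous_const.mul continuous_id)).continuousOn).mul
      hVcont).sub (continuousOn_const.mul hFcont)
  have hWderiv : ∀ x ∈ Ioo (0:ℝ) t, HasDerivAt W
      (Real.exp (c * x) * c * ‖y x - xstar‖ ^ 2
        + Real.exp (c * x) * (2 * ⟪y x - xstar, p (γt x) (y x) - y x + α⁻¹ • r x⟫)
        - c⁻¹ * g x) x := by
    intro x hx
    have hx0 : (0:ℝ) < x := hx.1
    have hEd : HasDerivAt (fun τ => Real.exp (c * τ)) (Real.exp (c * x) * c) x := by
      simpa using ((hasDerivAt_id x).const_mul c).exp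
    have hyd := (hy x hx0.le).sub_const xstar
    have hVd : HasDerivAt (fun τ => ‖y τ - xstar‖ ^ 2)
        (2 * ⟪y x - xstar, p (γt x) (y x) - y x + α⁻¹ • r x⟫) x := by
      have h2 := HasDerivAt.inner ℝ hyd hyd
      simp only [real_inner_self_eq_norm_sq] at h2
      exact h2.congr_deriv (by rw [real_inner_comm]; ring)
    have hFd : HasDerivAt F (g x) x := by
      apply intervalIntegral.integral_hasDerivAt_right
      · exact (hgcont.mono (by rw [uIcc_of_le hx0.le]; exact Icc_subset_Ici_self)).intervalIntegrable
      · exact ContinuousOn.stronglyMeasurableAtFilter isOpen_Ioi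
          (hgcont.mono Ioi_subset_Ici_self) x hx0
      · exact hgcont.continuousAt (Ici_mem_nhds hx0)
    exact (hEd.mul hVd).sub (hFd.const_mul c⁻¹)
  have hWanti : AntitoneOn W (Icc 0 t) := by
    apply antitoneOn_of_deriv_nonpos (convex_Icc 0 t) hWcont
    · intro x hx
      rw [interior_Icc] at hx
      exact ((hWderiv x hx).differentiableAt).differentiableWithinAt
    · intro x hx
      rw [interior_Icc] at hx
      rw [(hWderiv x hx).deriv]
      have hk := hkey x hx.1.le
      have hmul := mul_le_mul_of_nonneg_left hk (Real.exp_pos (c * x)).le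
      have hgval : g x = Real.exp (c * x) * (‖r x‖ ^ 2 / α ^ 2) := rfl
      rw [hgval]
      nlinarith [hmul]
  have hWle : W t ≤ W 0 := hWanti (left_mem_Icc.mpr ht) (right_mem_Icc.mpr ht) ht
  have hW0 : W 0 = ‖y 0 - xstar‖ ^ 2 := by
    simp [hWdef, hFdef]
  have hWt : Real.exp (c * t) * ‖y t - xstar‖ ^ 2 ≤ ‖y 0 - xstar‖ ^ 2 + c⁻¹ * F t := by
    rw [hW0] at hWle
    rw [hWdef] at hWle
    linarith [hWle]
  have hexp1 : Real.exp (-c * t) * Real.exp (c * t) = 1 := by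
    rw [neg_mul, Real.exp_neg, inv_mul_cancel₀ (Real.exp_ne_zero _)]
  have hint : (∫ s in (0:ℝ)..t, ‖r s‖ ^ 2 / α ^ 2 * Real.exp (-c * (t - s)))
      = Real.exp (-c * t) * F t := by
    rw [hFdef]
    rw [← intervalIntegral.integral_const_mul]
    apply intervalIntegral.integral_congr
    intro s _
    show ‖r s‖ ^ 2 / α ^ 2 * Real.exp (-c * (t - s))
      = Real.exp (-c * t) * (Real.exp (c * s) * (‖r s‖ ^ 2 / α ^ 2))
    rw [show (-c * (t - s)) = (-c * t) + c * s by ring, Real.exp_add]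
    ring
  rw [hint]
  have hmul2 := mul_le_mul_of_nonneg_left hWt (Real.exp_pos (-c * t)).le
  have he : Real.exp (-c * t) * (Real.exp (c * t) * ‖y t - xstar‖ ^ 2)
      = ‖y t - xstar‖ ^ 2 := by
    rw [← mul_assoc, hexp1, one_mul]
  rw [he] at hmul2
  linarith [hmul2]

end Helpers

/-- Proposition 2: convergence of the perturbed proximal ODE.
`P_s(x)` is given as a function `p` together with the property that `p s x` is the
(unique, by strong convexity) minimizer over the closed ball `B̄(x*, δ)` of
`y ↦ f(y) + ‖y − x‖²/(2s)`. -/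
theorem stmt4 {d : ℕ}
    (f : EuclideanSpace ℝ (Fin d) → ℝ) (xstar : EuclideanSpace ℝ (Fin d))
    (a L κ β : ℝ) (hf : ContDiff ℝ 1 f) (ha : 0 < a) (hL : 0 < L)
    (hgrad : ∀ x, ‖gradient f x‖ ≤ L * (1 + ‖x‖ ^ a))
    (hκ : 0 < κ) (hβ : 1 ≤ β)
    (hgrowth : ∀ x, f xstar + κ / 2 * ‖x - xstar‖ ^ β ≤ f x)
    (hmin : ∀ x, x ≠ xstar → f xstar < f x)
    (δ lam : ℝ) (hδ : 0 < δ) (hlam : 0 < lam)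
    -- `f` is `λ`-strongly convex on the closed ball `B̄(x*, δ)`
    (hconv : ConvexOn ℝ (Metric.closedBall xstar δ) (fun y => f y - lam / 2 * ‖y‖ ^ 2))
    -- the proximal-type operator `P_s(x)`
    (p : ℝ → EuclideanSpace ℝ (Fin d) → EuclideanSpace ℝ (Fin d))
    (hp : ∀ s : ℝ, 0 < s → ∀ x, p s x ∈ Metric.closedBall xstar δ ∧
      ∀ y ∈ Metric.closedBall xstar δ,
        f (p s x) + ‖p s x - x‖ ^ 2 / (2 * s) ≤ f y + ‖y - x‖ ^ 2 / (2 * s))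
    (γ : ℝ) (hγ : 0 < γ)
    (γt : ℝ → ℝ) (hγt : Continuous γt) (hγt' : ∀ t : ℝ, 0 ≤ t → γ / 2 ≤ γt t)
    (r : ℝ → EuclideanSpace ℝ (Fin d)) (hr : ContinuousOn r (Set.Ici 0))
    (α : ℝ) (hα : 0 < α)
    (y : ℝ → EuclideanSpace ℝ (Fin d))
    (hy : ∀ t : ℝ, 0 ≤ t → HasDerivAt y (p (γt t) (y t) - y t + α⁻¹ • r t) t) :
    ∀ t : ℝ, 0 ≤ t →
      ‖y t - xstar‖ ^ 2
        ≤ Real.exp (-(1 + 2 / (lam * γ))⁻¹ * t) * ‖y 0 - xstar‖ ^ 2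
          + ((1 + 2 / (lam * γ))⁻¹)⁻¹
            * ∫ s in (0:ℝ)..t, ‖r s‖ ^ 2 / α ^ 2
                * Real.exp (-(1 + 2 / (lam * γ))⁻¹ * (t - s)) := by
  exact stmt4_aux f xstar κ β hκ hβ hgrowth δ lam hδ hlam hconv p hp γ hγ γt hγt' r hr α hα y hy
end

section
/- Let Assumptions 1 and 2 hold. Let K > 0, let γ > 2K/(δ^{β−1} κ), and let x ∈ B(x*, K). Then the function y ↦ f(y) + ‖y − x‖²/(2γ) attains its global minimum over ℝ^d at a unique point p, and moreover p ∈ B(x*, δ). -/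
open MeasureTheory Real Set

set_option maxHeartbeats 1000000 in
/-- Lemma 2: well-posedness of the proximal operator. For `K > 0`,
`γ > 2K/(δ^{β−1}κ)` and `x ∈ B(x*, K)`, the function `y ↦ f(y) + ‖y − x‖²/(2γ)` attains
its global minimum over `ℝ^d` at a unique point `p`, and `p ∈ B(x*, δ)`. -/
theorem stmt6 {d : ℕ}
    (f : EuclideanSpace ℝ (Fin d) → ℝ) (xstar : EuclideanSpace ℝ (Fin d))
    (a L κ β : ℝ) (hf : ContDiff ℝ 1 f) (ha : 0 < a) (hL : 0 < L)
    (hgrad : ∀ x, ‖gradient f x‖ ≤ L * (1 + ‖x‖ ^ a))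
    (hκ : 0 < κ) (hβ : 1 ≤ β)
    (hgrowth : ∀ x, f xstar + κ / 2 * ‖x - xstar‖ ^ β ≤ f x)
    (hmin : ∀ x, x ≠ xstar → f xstar < f x)
    (hf3 : ContDiff ℝ 3 f) (δ lam : ℝ) (hδ : 0 < δ) (hlam : 0 < lam)
    (hconv : ConvexOn ℝ (Metric.ball xstar δ) (fun y => f y - lam / 2 * ‖y‖ ^ 2))
    (K γ : ℝ) (hK : 0 < K) (hγ : 2 * K / (δ ^ (β - 1) * κ) < γ)
    (x : EuclideanSpace ℝ (Fin d)) (hx : x ∈ Metric.ball xstar K) :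
    ∃ p : EuclideanSpace ℝ (Fin d),
      p ∈ Metric.ball xstar δ ∧
      IsMinOn (fun y => f y + ‖y - x‖ ^ 2 / (2 * γ)) Set.univ p ∧
      ∀ q : EuclideanSpace ℝ (Fin d),
        IsMinOn (fun y => f y + ‖y - x‖ ^ 2 / (2 * γ)) Set.univ q → q = p := by
  classical
  have hD : 0 < δ ^ (β - 1) := Real.rpow_pos_of_pos hδ _
  have hγ0 : 0 < γ := lt_trans (div_pos (by linarith) (mul_pos hD hκ)) hγ
  have hγ2 : (0:ℝ) < 2 * γ := by linarith
  have hγ' : 2 * K < γ * (δ ^ (β - 1) * κ) := (div_lt_iff₀ (mul_pos hD hκ)).mp hγ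
  have hx' : ‖xstar - x‖ < K := by
    rw [norm_sub_rev]; rwa [Metric.mem_ball, dist_eq_norm] at hx
  set g : EuclideanSpace ℝ (Fin d) → ℝ := fun y => f y + ‖y - x‖ ^ 2 / (2 * γ) with hg_def
  have hgy : ∀ y, g y = f y + ‖y - x‖ ^ 2 / (2 * γ) := fun y => rfl
  have hgc : Continuous g := by
    apply hf.continuous.add
    exact (((continuous_id.sub continuous_const).norm.pow 2)).div_const _
  -- existence of a minimizer on a big closed ball
  obtain ⟨p, hpC, hpmin⟩ := (isCompact_closedBall xstar (2 * K)).exists_isMinOn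
    ⟨xstar, Metric.mem_closedBall_self (by linarith)⟩ hgc.continuousOn
  -- p is a global minimizer
  have hglobal : IsMinOn g Set.univ p := by
    rw [isMinOn_iff]
    intro y _
    by_cases hy : y ∈ Metric.closedBall xstar (2 * K)
    · exact hpmin hy
    · have h1 : g p ≤ g xstar := hpmin (Metric.mem_closedBall_self (by linarith))
      have hy' : 2 * K < ‖y - xstar‖ := by
        rw [Metric.mem_closedBall, dist_eq_norm, not_le] at hy; exact hy
      have htri : ‖y - xstar‖ ≤ ‖y - x‖ + ‖xstar - x‖ := by
        have heq : y - xstar = (y - x) - (xstar - x) := by abel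
        rw [heq]; exact norm_sub_le _ _
      have hKy : ‖xstar - x‖ ≤ ‖y - x‖ := by linarith
      have h2 : ‖xstar - x‖ ^ 2 ≤ ‖y - x‖ ^ 2 := by
        nlinarith [norm_nonneg (xstar - x), norm_nonneg (y - x)]
      have h6 : ‖xstar - x‖ ^ 2 / (2 * γ) ≤ ‖y - x‖ ^ 2 / (2 * γ) := by
        exact div_le_div_of_nonneg_right h2 hγ2.le
      have h3 : (0:ℝ) ≤ κ / 2 * ‖y - xstar‖ ^ β := by
        have h7 : (0:ℝ) ≤ ‖y - xstar‖ ^ β := Real.rpow_nonneg (norm_nonneg _) _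
        positivity
      have h5 := hgrowth y
      rw [hgy xstar] at h1
      rw [hgy y]
      linarith
  -- any global minimizer lies in the open ball B(xstar, δ)
  have hball : ∀ r : EuclideanSpace ℝ (Fin d), IsMinOn g Set.univ r →
      r ∈ Metric.ball xstar δ := by
    intro r hr
    rw [Metric.mem_ball, dist_eq_norm]
    by_contra hcon
    push_neg at hcon
    have ht0 : 0 < ‖r - xstar‖ := lt_of_lt_of_le hδ hcon
    have hgr : g r ≤ g xstar := (isMinOn_iff.mp hr) xstar (Set.mem_univ _)
    rw [hgy r, hgy xstar] at hgr
    have hgrow := hgrowth r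
    have hkey : κ / 2 * ‖r - xstar‖ ^ β
        ≤ (‖xstar - x‖ ^ 2 - ‖r - x‖ ^ 2) / (2 * γ) := by
      rw [sub_div]; linarith
    have hkey2 : γ * κ * ‖r - xstar‖ ^ β ≤ ‖xstar - x‖ ^ 2 - ‖r - x‖ ^ 2 := by
      have h := (le_div_iff₀ hγ2).mp hkey
      nlinarith
    -- lower bound the rpow term
    have htβ : δ ^ (β - 1) * ‖r - xstar‖ ≤ ‖r - xstar‖ ^ β := by
      have h := Real.rpow_add ht0 1 (β - 1)
      rw [Real.rpow_one] at h
      have h2 : (1:ℝ) + (β - 1) = β := by ring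
      rw [h2] at h
      rw [h]
      have h3 : δ ^ (β - 1) ≤ ‖r - xstar‖ ^ (β - 1) :=
        Real.rpow_le_rpow hδ.le hcon (by linarith)
      nlinarith
    -- triangle inequality
    have htri : ‖xstar - x‖ ≤ ‖r - x‖ + ‖r - xstar‖ := by
      have heq : xstar - x = (r - x) - (r - xstar) := by abel
      rw [heq]; exact norm_sub_le _ _
    have hv0 : (0:ℝ) ≤ ‖r - x‖ := norm_nonneg _
    have hu0 : (0:ℝ) ≤ ‖xstar - x‖ := norm_nonneg _
    have huv : ‖xstar - x‖ ^ 2 - ‖r - x‖ ^ 2 ≤ 2 * K * ‖r - xstar‖ := by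
      rcases le_or_gt ‖r - x‖ ‖xstar - x‖ with h | h
      · nlinarith
      · nlinarith
    linarith [mul_le_mul_of_nonneg_left htβ (mul_pos hγ0 hκ).le,
      mul_lt_mul_of_pos_right hγ' ht0, hkey2, huv]
  refine ⟨p, hball p hglobal, hglobal, ?_⟩
  -- uniqueness
  intro q hq
  have hpB := hball p hglobal
  have hqB := hball q hq
  by_contra hne
  set z : EuclideanSpace ℝ (Fin d) := ((1:ℝ)/2) • p + ((1:ℝ)/2) • q with hz_def
  have hzB : z ∈ Metric.ball xstar δ :=
    (convex_ball xstar δ) hpB hqB (by norm_num) (by norm_num) (by norm_num)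
  have hgpq : g p = g q :=
    le_antisymm ((isMinOn_iff.mp hglobal) q (Set.mem_univ _))
      ((isMinOn_iff.mp hq) p (Set.mem_univ _))
  have hgz : g p ≤ g z := (isMinOn_iff.mp hglobal) z (Set.mem_univ _)
  rw [hgy p, hgy q] at hgpq
  rw [hgy p, hgy z] at hgz
  have hcv := hconv.2 hpB hqB (by norm_num : (0:ℝ) ≤ 1/2) (by norm_num : (0:ℝ) ≤ 1/2)
    (by norm_num : (1:ℝ)/2 + 1/2 = 1)
  simp only [← hz_def, smul_eq_mul] at hcv
  -- norm identities
  have hid1 : ‖z‖ ^ 2 * 4 = ‖p‖ ^ 2 + 2 * inner ℝ p q + ‖q‖ ^ 2 := by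
    have h1 : z = ((1:ℝ)/2) • (p + q) := by rw [hz_def]; module
    have h2 : ‖z‖ = (1/2) * ‖p + q‖ := by rw [h1, norm_smul]; norm_num
    rw [h2, ← norm_add_sq_real]; ring
  have hid2 : ‖p - q‖ ^ 2 = ‖p‖ ^ 2 - 2 * inner ℝ p q + ‖q‖ ^ 2 := norm_sub_sq_real p q
  have hid3 : ‖z - x‖ ^ 2 * 4 = ‖p - x‖ ^ 2 + 2 * inner ℝ (p - x) (q - x) + ‖q - x‖ ^ 2 := by
    have h1 : z - x = ((1:ℝ)/2) • ((p - x) + (q - x)) := by rw [hz_def]; module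
    have h2 : ‖z - x‖ = (1/2) * ‖(p - x) + (q - x)‖ := by rw [h1, norm_smul]; norm_num
    rw [h2, ← norm_add_sq_real]; ring
  have hid4 : ‖p - q‖ ^ 2 = ‖p - x‖ ^ 2 - 2 * inner ℝ (p - x) (q - x) + ‖q - x‖ ^ 2 := by
    have h1 : p - q = (p - x) - (q - x) := by abel
    rw [h1]; exact norm_sub_sq_real _ _
  have hpqpos : 0 < ‖p - q‖ ^ 2 := by
    have hne' : p - q ≠ 0 := sub_ne_zero.mpr (fun h => hne h.symm)
    exact pow_pos (norm_pos_iff.mpr hne') 2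
  -- combine convexity with the parallelogram identity
  have hz2 : ‖z‖ ^ 2 = (‖p‖ ^ 2 + ‖q‖ ^ 2) / 2 - ‖p - q‖ ^ 2 / 4 := by linarith
  have hz2' : lam * ‖z‖ ^ 2 = lam * ((‖p‖ ^ 2 + ‖q‖ ^ 2) / 2 - ‖p - q‖ ^ 2 / 4) := by
    rw [hz2]
  have hcv2 : f z ≤ (f p + f q) / 2 - lam / 8 * ‖p - q‖ ^ 2 := by nlinarith [hcv, hz2']
  have hzx : ‖z - x‖ ^ 2 = (‖p - x‖ ^ 2 + ‖q - x‖ ^ 2) / 2 - ‖p - q‖ ^ 2 / 4 := by linarith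
  have hzq : ‖z - x‖ ^ 2 / (2 * γ)
      = ‖p - x‖ ^ 2 / (2 * γ) / 2 + ‖q - x‖ ^ 2 / (2 * γ) / 2
        - ‖p - q‖ ^ 2 / (2 * γ) / 4 := by
    rw [hzx]; ring
  have hpos1 : 0 < ‖p - q‖ ^ 2 / (2 * γ) := div_pos hpqpos hγ2
  have hpos2 : 0 < lam / 8 * ‖p - q‖ ^ 2 := by positivity
  linarith [hgz, hgpq, hcv2, hzq, hpos1, hpos2]
end

section
/- Let Assumption 1 hold and let α > 0. Define h0(x) := x e^{−α f(x)} and h1(x) := e^{−α f(x)}. Then the suprema L_{0,α} := e^{−α f(x*)} · sup_{x ∈ ℝ^d} e^{−(κα/2)‖x − x*‖^β} (1 + αL‖x‖ + αL‖x‖^{a+1}) and L_{1,α} := e^{−α f(x*)} · sup_{x ∈ ℝ^d} e^{−(κα/2)‖x − x*‖^β} αL(1 + ‖x‖^a) are finite, and for all x, y ∈ ℝ^d: ‖h0(x) − h0(y)‖ ≤ L_{0,α} ‖x − y‖ and |h1(x) − h1(y)| ≤ L_{1,α} ‖x − y‖. -/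
open MeasureTheory Real Set

lemma auxB {c : ℝ} (hc : 0 < c) (p : ℝ) (hp : 0 ≤ p) :
    ∃ M : ℝ, 1 ≤ M ∧ ∀ t : ℝ, 0 ≤ t → Real.exp (-(c * t)) * t ^ p ≤ M := by
  set n : ℕ := ⌈p⌉₊ with hn
  refine ⟨max 1 ((n.factorial : ℝ) / c ^ n), le_max_left _ _, fun t ht => ?_⟩
  rcases le_total t 1 with h1 | h1
  · have h2 : t ^ p ≤ 1 := Real.rpow_le_one ht h1 hp
    have h3 : Real.exp (-(c * t)) ≤ 1 := Real.exp_le_one_iff.mpr (by nlinarith)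
    have := mul_le_mul h3 h2 (Real.rpow_nonneg ht p) zero_le_one
    simpa using this.trans (le_max_left _ _)
  · have hposc : (0:ℝ) < c ^ n := pow_pos hc n
    have h2 : t ^ p ≤ t ^ (n : ℕ) := by
      have := Real.rpow_le_rpow_of_exponent_le h1 (Nat.le_ceil p)
      rwa [Real.rpow_natCast] at this
    have h3 : (c * t) ^ n / (n.factorial : ℝ) ≤ Real.exp (c * t) :=
      Real.pow_div_factorial_le_exp (x := c*t) (mul_nonneg hc.le ht) n
    have hfac : (0:ℝ) < n.factorial := by exact_mod_cast n.factorial_pos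
    have h4 : Real.exp (-(c * t)) * t ^ (n:ℕ) ≤ (n.factorial : ℝ) / c ^ n := by
      rw [Real.exp_neg, inv_mul_le_iff₀ (Real.exp_pos _), mul_div_assoc',
        le_div_iff₀ hposc]
      have h3' : (c * t) ^ n ≤ Real.exp (c * t) * (n.factorial : ℝ) := by
        rw [div_le_iff₀ hfac] at h3; linarith
      calc t ^ n * c ^ n = (c * t) ^ n := by rw [← mul_pow]; ring_nf
        _ ≤ _ := h3'
    refine le_trans ?_ ((le_max_right _ _))
    calc Real.exp (-(c * t)) * t ^ p ≤ Real.exp (-(c * t)) * t ^ (n:ℕ) := by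
          exact mul_le_mul_of_nonneg_left h2 (Real.exp_pos _).le
      _ ≤ _ := h4

lemma auxC {d : ℕ} {c β p : ℝ} (hc : 0 < c) (hβ : 1 ≤ β) (hp : 0 ≤ p)
    (xstar : EuclideanSpace ℝ (Fin d)) :
    ∃ M : ℝ, 0 ≤ M ∧ ∀ x : EuclideanSpace ℝ (Fin d),
      Real.exp (-c * ‖x - xstar‖ ^ β) * ‖x‖ ^ p ≤ M := by
  obtain ⟨M, hM1, hM⟩ := auxB hc p hp
  set s : ℝ := ‖xstar‖ with hs
  have hs0 : 0 ≤ s := norm_nonneg _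
  refine ⟨(1 + s) ^ p * M, by positivity, fun x => ?_⟩
  set t : ℝ := ‖x - xstar‖ with htdef
  have ht : 0 ≤ t := norm_nonneg _
  have hxle : ‖x‖ ≤ t + s := by
    calc ‖x‖ = ‖(x - xstar) + xstar‖ := by rw [sub_add_cancel]
      _ ≤ t + s := norm_add_le _ _
  have hxp : ‖x‖ ^ p ≤ (t + s) ^ p := Real.rpow_le_rpow (norm_nonneg _) hxle hp
  have htβ : 0 ≤ t ^ β := Real.rpow_nonneg ht β
  rcases le_total t 1 with h1 | h1
  · have hexp : Real.exp (-c * t ^ β) ≤ 1 := Real.exp_le_one_iff.mpr (by nlinarith)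
    have h2 : (t + s) ^ p ≤ (1 + s) ^ p :=
      Real.rpow_le_rpow (by linarith) (by linarith) hp
    have h3 : ‖x‖ ^ p ≤ (1 + s) ^ p := hxp.trans h2
    have := mul_le_mul hexp h3 (Real.rpow_nonneg (norm_nonneg _) p) zero_le_one
    rw [one_mul] at this
    nlinarith [Real.rpow_nonneg (show (0:ℝ) ≤ 1 + s by linarith) p]
  · have htβge : t ≤ t ^ β := by
      have := Real.rpow_le_rpow_of_exponent_le h1 hβ
      rwa [Real.rpow_one] at this
    have hexp : Real.exp (-c * t ^ β) ≤ Real.exp (-(c * t)) := by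
      apply Real.exp_le_exp.mpr; nlinarith
    have h2 : (t + s) ^ p ≤ ((1 + s) * t) ^ p := by
      apply Real.rpow_le_rpow (by linarith) (by nlinarith) hp
    have h3 : ((1 + s) * t) ^ p = (1 + s) ^ p * t ^ p :=
      Real.mul_rpow (by linarith) ht
    have key : Real.exp (-(c*t)) * t ^ p ≤ M := hM t ht
    have h5 : Real.exp (-c * t ^ β) * ‖x‖ ^ p
        ≤ Real.exp (-(c * t)) * ((1 + s) ^ p * t ^ p) := by
      rw [← h3]
      exact mul_le_mul hexp (hxp.trans h2) (Real.rpow_nonneg (norm_nonneg _) p)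
        (Real.exp_pos _).le
    calc Real.exp (-c * t ^ β) * ‖x‖ ^ p
        ≤ Real.exp (-(c * t)) * ((1 + s) ^ p * t ^ p) := h5
      _ = (1 + s) ^ p * (Real.exp (-(c*t)) * t ^ p) := by ring
      _ ≤ (1 + s) ^ p * M := by
          exact mul_le_mul_of_nonneg_left key (by positivity)

/-- Lemma 1, first claims: the suprema defining `L_{0,α}` and `L_{1,α}`
are finite, and `h0 : x ↦ x e^{−αf(x)}` and `h1 : x ↦ e^{−αf(x)}` are Lipschitz with these
constants. -/
theorem stmt8 {d : ℕ}
    (f : EuclideanSpace ℝ (Fin d) → ℝ) (xstar : EuclideanSpace ℝ (Fin d))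
    (a L κ β : ℝ) (hf : ContDiff ℝ 1 f) (ha : 0 < a) (hL : 0 < L)
    (hgrad : ∀ x, ‖gradient f x‖ ≤ L * (1 + ‖x‖ ^ a))
    (hκ : 0 < κ) (hβ : 1 ≤ β)
    (hgrowth : ∀ x, f xstar + κ / 2 * ‖x - xstar‖ ^ β ≤ f x)
    (hmin : ∀ x, x ≠ xstar → f xstar < f x)
    (α : ℝ) (hα : 0 < α) :
    BddAbove (Set.range fun x : EuclideanSpace ℝ (Fin d) =>
      Real.exp (-(κ * α / 2) * ‖x - xstar‖ ^ β) * (1 + α * L * ‖x‖ + α * L * ‖x‖ ^ (a + 1))) ∧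
    BddAbove (Set.range fun x : EuclideanSpace ℝ (Fin d) =>
      Real.exp (-(κ * α / 2) * ‖x - xstar‖ ^ β) * (α * L * (1 + ‖x‖ ^ a))) ∧
    (∀ x y : EuclideanSpace ℝ (Fin d),
      ‖Real.exp (-α * f x) • x - Real.exp (-α * f y) • y‖
        ≤ (Real.exp (-α * f xstar) * ⨆ z : EuclideanSpace ℝ (Fin d),
            Real.exp (-(κ * α / 2) * ‖z - xstar‖ ^ β)
              * (1 + α * L * ‖z‖ + α * L * ‖z‖ ^ (a + 1))) * ‖x - y‖) ∧
    (∀ x y : EuclideanSpace ℝ (Fin d),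
      |Real.exp (-α * f x) - Real.exp (-α * f y)|
        ≤ (Real.exp (-α * f xstar) * ⨆ z : EuclideanSpace ℝ (Fin d),
            Real.exp (-(κ * α / 2) * ‖z - xstar‖ ^ β) * (α * L * (1 + ‖z‖ ^ a))) * ‖x - y‖) := by
  have hc : (0:ℝ) < κ * α / 2 := by positivity
  obtain ⟨M1, hM1n, hM1⟩ := auxC (p := 1) hc hβ zero_le_one xstar
  obtain ⟨M2, hM2n, hM2⟩ := auxC (p := a + 1) hc hβ (by linarith) xstar
  obtain ⟨M3, hM3n, hM3⟩ := auxC (p := a) hc hβ ha.le xstar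
  have hgnn : ∀ x : EuclideanSpace ℝ (Fin d),
      0 ≤ Real.exp (-(κ * α / 2) * ‖x - xstar‖ ^ β) := fun x => (Real.exp_pos _).le
  have hg1 : ∀ x : EuclideanSpace ℝ (Fin d),
      Real.exp (-(κ * α / 2) * ‖x - xstar‖ ^ β) ≤ 1 := by
    intro x
    apply Real.exp_le_one_iff.mpr
    have := Real.rpow_nonneg (norm_nonneg (x - xstar)) β
    nlinarith
  -- BddAbove for φ0
  have hB0 : BddAbove (Set.range fun x : EuclideanSpace ℝ (Fin d) =>
      Real.exp (-(κ * α / 2) * ‖x - xstar‖ ^ β)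
        * (1 + α * L * ‖x‖ + α * L * ‖x‖ ^ (a + 1))) := by
    refine ⟨1 + α * L * M1 + α * L * M2, ?_⟩
    rintro r ⟨x, rfl⟩
    have e1 : Real.exp (-(κ * α / 2) * ‖x - xstar‖ ^ β) * ‖x‖ ≤ M1 := by
      have := hM1 x; rwa [Real.rpow_one] at this
    have e2 : Real.exp (-(κ * α / 2) * ‖x - xstar‖ ^ β) * ‖x‖ ^ (a + 1) ≤ M2 := hM2 x
    have e3 := hg1 x
    have hαL : (0:ℝ) ≤ α * L := by positivity
    calc Real.exp (-(κ * α / 2) * ‖x - xstar‖ ^ β)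
          * (1 + α * L * ‖x‖ + α * L * ‖x‖ ^ (a + 1))
        = Real.exp (-(κ * α / 2) * ‖x - xstar‖ ^ β)
          + α * L * (Real.exp (-(κ * α / 2) * ‖x - xstar‖ ^ β) * ‖x‖)
          + α * L * (Real.exp (-(κ * α / 2) * ‖x - xstar‖ ^ β) * ‖x‖ ^ (a + 1)) := by ring
      _ ≤ 1 + α * L * M1 + α * L * M2 := by
          exact add_le_add (add_le_add e3 (mul_le_mul_of_nonneg_left e1 hαL))
            (mul_le_mul_of_nonneg_left e2 hαL)
  -- BddAbove for φ1
  have hB1 : BddAbove (Set.range fun x : EuclideanSpace ℝ (Fin d) =>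
      Real.exp (-(κ * α / 2) * ‖x - xstar‖ ^ β) * (α * L * (1 + ‖x‖ ^ a))) := by
    refine ⟨α * L * (1 + M3), ?_⟩
    rintro r ⟨x, rfl⟩
    have e3 := hg1 x
    have e4 : Real.exp (-(κ * α / 2) * ‖x - xstar‖ ^ β) * ‖x‖ ^ a ≤ M3 := hM3 x
    have hαL : (0:ℝ) ≤ α * L := by positivity
    calc Real.exp (-(κ * α / 2) * ‖x - xstar‖ ^ β) * (α * L * (1 + ‖x‖ ^ a))
        = α * L * (Real.exp (-(κ * α / 2) * ‖x - xstar‖ ^ β)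
            + Real.exp (-(κ * α / 2) * ‖x - xstar‖ ^ β) * ‖x‖ ^ a) := by ring
      _ ≤ α * L * (1 + M3) := by
          exact mul_le_mul_of_nonneg_left (add_le_add e3 e4) hαL
  -- basic differentiability facts
  have hdiff : ∀ x, HasFDerivAt f (fderiv ℝ f x) x :=
    fun x => ((hf.differentiable one_ne_zero) x).hasFDerivAt
  have hng : ∀ x, ‖gradient f x‖ = ‖fderiv ℝ f x‖ := by
    intro x
    unfold gradient
    exact LinearIsometryEquiv.norm_map _ _
  have hDf : ∀ x, ‖fderiv ℝ f x‖ ≤ L * (1 + ‖x‖ ^ a) := by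
    intro x; have := hgrad x; rwa [hng x] at this
  have hexp : ∀ x : EuclideanSpace ℝ (Fin d),
      Real.exp (-α * f x)
        ≤ Real.exp (-α * f xstar) * Real.exp (-(κ * α / 2) * ‖x - xstar‖ ^ β) := by
    intro x
    rw [← Real.exp_add]
    apply Real.exp_le_exp.mpr
    have h := mul_le_mul_of_nonneg_left (hgrowth x) hα.le
    nlinarith [Real.rpow_nonneg (norm_nonneg (x - xstar)) β]
  -- derivative of h1
  set D1 : EuclideanSpace ℝ (Fin d) → (EuclideanSpace ℝ (Fin d) →L[ℝ] ℝ) :=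
    fun x => Real.exp (-α * f x) • ((-α) • fderiv ℝ f x) with hD1def
  have HD1 : ∀ x, HasFDerivAt (fun y => Real.exp (-α * f y)) (D1 x) x :=
    fun x => ((hdiff x).const_mul (-α)).exp
  have nD1 : ∀ x, ‖D1 x‖ ≤ Real.exp (-α * f x) * (α * ‖fderiv ℝ f x‖) := by
    intro x
    have hrfl : D1 x = Real.exp (-α * f x) • ((-α) • fderiv ℝ f x) := rfl
    rw [hrfl]
    calc ‖Real.exp (-α * f x) • ((-α) • fderiv ℝ f x)‖
        ≤ ‖Real.exp (-α * f x)‖ * ‖(-α) • fderiv ℝ f x‖ :=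
          ContinuousLinearMap.opNorm_smul_le _ _
      _ ≤ ‖Real.exp (-α * f x)‖ * (‖-α‖ * ‖fderiv ℝ f x‖) := by
          exact mul_le_mul_of_nonneg_left (ContinuousLinearMap.opNorm_smul_le _ _)
            (norm_nonneg _)
      _ = Real.exp (-α * f x) * (α * ‖fderiv ℝ f x‖) := by
          rw [Real.norm_eq_abs, Real.abs_exp, Real.norm_eq_abs, abs_neg, abs_of_pos hα]
  -- constants
  set C0 : ℝ := ⨆ z : EuclideanSpace ℝ (Fin d),
      Real.exp (-(κ * α / 2) * ‖z - xstar‖ ^ β)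
        * (1 + α * L * ‖z‖ + α * L * ‖z‖ ^ (a + 1)) with hC0
  set C1 : ℝ := ⨆ z : EuclideanSpace ℝ (Fin d),
      Real.exp (-(κ * α / 2) * ‖z - xstar‖ ^ β) * (α * L * (1 + ‖z‖ ^ a)) with hC1
  have hsup0 : ∀ x : EuclideanSpace ℝ (Fin d),
      Real.exp (-(κ * α / 2) * ‖x - xstar‖ ^ β)
        * (1 + α * L * ‖x‖ + α * L * ‖x‖ ^ (a + 1)) ≤ C0 := fun x => le_ciSup hB0 x
  have hsup1 : ∀ x : EuclideanSpace ℝ (Fin d),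
      Real.exp (-(κ * α / 2) * ‖x - xstar‖ ^ β) * (α * L * (1 + ‖x‖ ^ a)) ≤ C1 :=
    fun x => le_ciSup hB1 x
  have bound1 : ∀ x, ‖D1 x‖ ≤ Real.exp (-α * f xstar) * C1 := by
    intro x
    have hx1 : (0:ℝ) ≤ 1 + ‖x‖ ^ a := by
      have := Real.rpow_nonneg (norm_nonneg x) a; linarith
    calc ‖D1 x‖ ≤ Real.exp (-α * f x) * (α * ‖fderiv ℝ f x‖) := nD1 x
      _ ≤ Real.exp (-α * f x) * (α * (L * (1 + ‖x‖ ^ a))) := by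
          apply mul_le_mul_of_nonneg_left _ (Real.exp_pos _).le
          exact mul_le_mul_of_nonneg_left (hDf x) hα.le
      _ ≤ (Real.exp (-α * f xstar) * Real.exp (-(κ * α / 2) * ‖x - xstar‖ ^ β))
            * (α * (L * (1 + ‖x‖ ^ a))) := by
          apply mul_le_mul_of_nonneg_right (hexp x) (by positivity)
      _ = Real.exp (-α * f xstar)
            * (Real.exp (-(κ * α / 2) * ‖x - xstar‖ ^ β) * (α * L * (1 + ‖x‖ ^ a))) := by
          ring
      _ ≤ Real.exp (-α * f xstar) * C1 :=
          mul_le_mul_of_nonneg_left (hsup1 x) (Real.exp_pos _).le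
  -- derivative of h0
  set D0 : EuclideanSpace ℝ (Fin d) →
      (EuclideanSpace ℝ (Fin d) →L[ℝ] EuclideanSpace ℝ (Fin d)) :=
    fun x => Real.exp (-α * f x) • ContinuousLinearMap.id ℝ (EuclideanSpace ℝ (Fin d))
      + (D1 x).smulRight x with hD0def
  have HD0 : ∀ x, HasFDerivAt (fun y => Real.exp (-α * f y) • y) (D0 x) x :=
    fun x => (HD1 x).smul (hasFDerivAt_id x)
  have bound0 : ∀ x, ‖D0 x‖ ≤ Real.exp (-α * f xstar) * C0 := by
    intro x
    have hxa : ‖x‖ ^ a * ‖x‖ = ‖x‖ ^ (a + 1) := by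
      rcases eq_or_ne ‖x‖ 0 with h | h
      · rw [h]
        rw [Real.zero_rpow (by positivity : a + 1 ≠ 0), Real.zero_rpow ha.ne', zero_mul]
      · rw [Real.rpow_add_one h]
    have step1 : ‖D0 x‖ ≤ Real.exp (-α * f x)
        * (1 + α * L * ‖x‖ + α * L * ‖x‖ ^ (a + 1)) := by
      rw [hD0def]
      refine (norm_add_le _ _).trans ?_
      have t1 : ‖Real.exp (-α * f x) • ContinuousLinearMap.id ℝ (EuclideanSpace ℝ (Fin d))‖
          ≤ Real.exp (-α * f x) := by
        refine (ContinuousLinearMap.opNorm_smul_le _ _).trans ?_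
        rw [Real.norm_eq_abs, Real.abs_exp]
        calc Real.exp (-α * f x) * ‖ContinuousLinearMap.id ℝ (EuclideanSpace ℝ (Fin d))‖
            ≤ Real.exp (-α * f x) * 1 :=
              mul_le_mul_of_nonneg_left ContinuousLinearMap.norm_id_le (Real.exp_pos _).le
          _ = _ := mul_one _
      have t2 : ‖(D1 x).smulRight x‖
          ≤ Real.exp (-α * f x) * (α * L * ‖x‖ + α * L * ‖x‖ ^ (a + 1)) := by
        rw [ContinuousLinearMap.norm_smulRight_apply]
        refine (mul_le_mul_of_nonneg_right (nD1 x) (norm_nonneg x)).trans ?_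
        have h1 : α * ‖fderiv ℝ f x‖ * ‖x‖ ≤ α * (L * (1 + ‖x‖ ^ a)) * ‖x‖ := by
          apply mul_le_mul_of_nonneg_right _ (norm_nonneg x)
          exact mul_le_mul_of_nonneg_left (hDf x) hα.le
        have h2 : α * (L * (1 + ‖x‖ ^ a)) * ‖x‖
            = α * L * ‖x‖ + α * L * (‖x‖ ^ a * ‖x‖) := by ring
        rw [mul_assoc]
        apply mul_le_mul_of_nonneg_left _ (Real.exp_pos _).le
        calc α * ‖fderiv ℝ f x‖ * ‖x‖ ≤ α * (L * (1 + ‖x‖ ^ a)) * ‖x‖ := h1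
          _ = α * L * ‖x‖ + α * L * (‖x‖ ^ a * ‖x‖) := h2
          _ = α * L * ‖x‖ + α * L * ‖x‖ ^ (a + 1) := by rw [hxa]
      calc _ ≤ Real.exp (-α * f x)
            + Real.exp (-α * f x) * (α * L * ‖x‖ + α * L * ‖x‖ ^ (a + 1)) :=
          add_le_add t1 t2
        _ = Real.exp (-α * f x) * (1 + α * L * ‖x‖ + α * L * ‖x‖ ^ (a + 1)) := by ring
    have hP : (0:ℝ) ≤ 1 + α * L * ‖x‖ + α * L * ‖x‖ ^ (a + 1) := by
      have := Real.rpow_nonneg (norm_nonneg x) (a + 1)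
      have := norm_nonneg x
      positivity
    calc ‖D0 x‖ ≤ Real.exp (-α * f x) * (1 + α * L * ‖x‖ + α * L * ‖x‖ ^ (a + 1)) := step1
      _ ≤ (Real.exp (-α * f xstar) * Real.exp (-(κ * α / 2) * ‖x - xstar‖ ^ β))
            * (1 + α * L * ‖x‖ + α * L * ‖x‖ ^ (a + 1)) :=
          mul_le_mul_of_nonneg_right (hexp x) hP
      _ = Real.exp (-α * f xstar)
            * (Real.exp (-(κ * α / 2) * ‖x - xstar‖ ^ β)
              * (1 + α * L * ‖x‖ + α * L * ‖x‖ ^ (a + 1))) := by ring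
      _ ≤ Real.exp (-α * f xstar) * C0 :=
          mul_le_mul_of_nonneg_left (hsup0 x) (Real.exp_pos _).le
  refine ⟨hB0, hB1, fun x y => ?_, fun x y => ?_⟩
  · exact (convex_univ).norm_image_sub_le_of_norm_hasFDerivWithin_le
      (fun z _ => (HD0 z).hasFDerivWithinAt) (fun z _ => bound0 z)
      (mem_univ y) (mem_univ x)
  · rw [← Real.norm_eq_abs]
    exact (convex_univ).norm_image_sub_le_of_norm_hasFDerivWithin_le
      (fun z _ => (HD1 z).hasFDerivWithinAt) (fun z _ => bound1 z)
      (mem_univ y) (mem_univ x)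
end

section
/- Let Assumption 1 hold and let α > 0. Let μ, μ' be probability measures on ℝ^d with finite first moments. Then for every coupling π of μ and μ' (i.e. a probability measure on ℝ^d × ℝ^d with marginals μ and μ'): ‖θ_α(μ) − θ_α(μ')‖ ≤ (∫ ‖x − y‖ dπ(x,y)) · (L_{0,α} + ‖θ_α(μ')‖·L_{1,α}) / (∫ e^{−α f(x)} dμ(x)). In particular, taking the infimum over couplings, ‖θ_α(μ) − θ_α(μ')‖ is bounded by the Wasserstein-1 distance between μ and μ' times (L_{0,α} + ‖θ_α(μ')‖ L_{1,α})/∫ e^{−α f} dμ. -/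
open MeasureTheory Real Set Filter

lemma tendsto_exp_shift (s c R : ℝ) (hc : 0 < c) :
    Tendsto (fun t : ℝ => Real.exp (-(c*t)) * (t+R) ^ s) atTop (nhds 0) := by
  have h1 : Tendsto (fun t : ℝ => ((t+R) ^ s * Real.exp (-c * (t+R))) * Real.exp (c*R))
      atTop (nhds 0) := by
    have := (tendsto_rpow_mul_exp_neg_mul_atTop_nhds_zero s c hc).comp
      (tendsto_atTop_add_const_right atTop R tendsto_id)
    simpa using this.mul_const (Real.exp (c*R))
  refine h1.congr (fun t => ?_)
  rw [mul_assoc, ← Real.exp_add]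
  rw [show -c * (t+R) + c*R = -(c*t) by ring]
  ring

lemma tendsto_exp_const (c A : ℝ) (hc : 0 < c) :
    Tendsto (fun t : ℝ => Real.exp (-(c*t)) * A) atTop (nhds 0) := by
  have h1 : Tendsto (fun t : ℝ => -(c*t)) atTop atBot := by
    have := (tendsto_const_mul_atTop_of_pos hc).mpr (tendsto_id (α := ℝ))
    exact tendsto_neg_atBot_iff.mpr this
  simpa using (Real.tendsto_exp_atBot.comp h1).mul_const A

lemma exists_bound (c β R : ℝ) (hc : 0 < c) (hβ : 1 ≤ β)
    (Q : ℝ → ℝ) (hQc : ContinuousOn Q (Ici 0)) (hQ0 : ∀ t, 0 ≤ t → 0 ≤ Q t)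
    (hT : Tendsto (fun t => Real.exp (-(c*t)) * Q (t + R)) atTop (nhds 0)) (hR : 0 ≤ R) :
    ∃ M, ∀ t ∈ Ici (0:ℝ), Real.exp (-c * t ^ β) * Q (t + R) ≤ M := by
  obtain ⟨T, hT1⟩ := (hT.eventually_lt_const one_pos).exists_forall_of_atTop
  set T' := max T 1 with hT'
  have hcont : ContinuousOn (fun t => Real.exp (-c * t ^ β) * Q (t + R)) (Icc 0 T') := by
    apply ContinuousOn.mul
    · apply Continuous.comp_continuousOn Real.continuous_exp
      apply ContinuousOn.mul continuousOn_const
      intro t ht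
      exact (Real.continuousAt_rpow_const t β (Or.inr (by linarith))).continuousWithinAt
    · apply hQc.comp (by fun_prop)
      intro t ht
      simp only [mem_Ici]
      have := ht.1
      linarith
  obtain ⟨M₁, hM₁⟩ := (isCompact_Icc (a := (0:ℝ)) (b := T')).exists_bound_of_continuousOn hcont
  refine ⟨max M₁ 1, fun t ht => ?_⟩
  rcases le_or_gt t T' with h | h
  · have := hM₁ t ⟨ht, h⟩
    calc Real.exp (-c * t ^ β) * Q (t + R) ≤ ‖Real.exp (-c * t ^ β) * Q (t + R)‖ :=
          le_abs_self _
      _ ≤ M₁ := this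
      _ ≤ max M₁ 1 := le_max_left _ _
  · have ht1 : (1:ℝ) ≤ t := le_trans (le_max_right T 1) h.le
    have htT : T ≤ t := le_trans (le_max_left T 1) h.le
    have hpow : t ≤ t ^ β := by
      nth_rewrite 1 [← Real.rpow_one t]
      exact Real.rpow_le_rpow_of_exponent_le ht1 hβ
    have hee : Real.exp (-c * t ^ β) ≤ Real.exp (-(c*t)) := by
      apply Real.exp_le_exp.mpr
      nlinarith
    calc Real.exp (-c * t ^ β) * Q (t + R) ≤ Real.exp (-(c*t)) * Q (t + R) :=
          mul_le_mul_of_nonneg_right hee (hQ0 _ (by linarith))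
      _ ≤ 1 := (hT1 t htT).le
      _ ≤ max M₁ 1 := le_max_right _ _

lemma rpow_mul_self (t a : ℝ) (ht : 0 ≤ t) (ha : 0 < a) : t ^ a * t = t ^ (a+1) := by
  rcases eq_or_lt_of_le ht with h | h
  · rw [← h, Real.zero_rpow ha.ne', Real.zero_rpow (by linarith), zero_mul]
  · rw [Real.rpow_add_one h.ne']


lemma deriv_bounds {d : ℕ} (f : EuclideanSpace ℝ (Fin d) → ℝ) (α : ℝ) (hf : ContDiff ℝ 1 f)
    (x : EuclideanSpace ℝ (Fin d)) :
    HasFDerivAt (fun y => Real.exp (-α * f y))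
      (Real.exp (-α * f x) • ((-α) • fderiv ℝ f x)) x ∧
    HasFDerivAt (fun y => Real.exp (-α * f y) • y)
      ((Real.exp (-α * f x)) • (ContinuousLinearMap.id ℝ (EuclideanSpace ℝ (Fin d)))
        + (Real.exp (-α * f x) • ((-α) • fderiv ℝ f x)).smulRight x) x := by
  have hdf : HasFDerivAt f (fderiv ℝ f x) x :=
    (hf.differentiable one_ne_zero x).hasFDerivAt
  have h1 : HasFDerivAt (fun y => -α * f y) ((-α) • fderiv ℝ f x) x := hdf.const_mul (-α)
  have h2 := h1.exp
  exact ⟨h2, h2.smul (hasFDerivAt_id x)⟩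

lemma norm_h' {d : ℕ} (f : EuclideanSpace ℝ (Fin d) → ℝ) (α : ℝ) (x : EuclideanSpace ℝ (Fin d)) :
    ‖Real.exp (-α * f x) • ((-α) • fderiv ℝ f x)‖
      = Real.exp (-α * f x) * (|α| * ‖fderiv ℝ f x‖) := by
  rw [norm_smul, norm_smul]
  simp [Real.abs_exp]

set_option maxHeartbeats 1000000

/-- Lemma 1, third claim: stability of the consensus point `θ_α`
with respect to couplings (hence the Wasserstein-1 distance). -/
theorem stmt9 {d : ℕ}
    (f : EuclideanSpace ℝ (Fin d) → ℝ) (xstar : EuclideanSpace ℝ (Fin d))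
    (a L κ β : ℝ) (hf : ContDiff ℝ 1 f) (ha : 0 < a) (hL : 0 < L)
    (hgrad : ∀ x, ‖gradient f x‖ ≤ L * (1 + ‖x‖ ^ a))
    (hκ : 0 < κ) (hβ : 1 ≤ β)
    (hgrowth : ∀ x, f xstar + κ / 2 * ‖x - xstar‖ ^ β ≤ f x)
    (hmin : ∀ x, x ≠ xstar → f xstar < f x)
    (α : ℝ) (hα : 0 < α)
    (μ μ' : Measure (EuclideanSpace ℝ (Fin d)))
    (hμ : IsProbabilityMeasure μ) (hμ' : IsProbabilityMeasure μ')
    -- finite first moments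
    (hmom : Integrable (fun x => ‖x‖) μ) (hmom' : Integrable (fun x => ‖x‖) μ')
    -- `π` is a coupling of `μ` and `μ'`
    (cpl : Measure (EuclideanSpace ℝ (Fin d) × EuclideanSpace ℝ (Fin d)))
    (hcpl : IsProbabilityMeasure cpl)
    (hπ1 : cpl.map Prod.fst = μ) (hπ2 : cpl.map Prod.snd = μ') :
    ‖thetaAlpha α f μ - thetaAlpha α f μ'‖
      ≤ (∫ p, ‖p.1 - p.2‖ ∂cpl)
          * ((Real.exp (-α * f xstar) * ⨆ z : EuclideanSpace ℝ (Fin d),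
                Real.exp (-(κ * α / 2) * ‖z - xstar‖ ^ β)
                  * (1 + α * L * ‖z‖ + α * L * ‖z‖ ^ (a + 1)))
              + ‖thetaAlpha α f μ'‖
                * (Real.exp (-α * f xstar) * ⨆ z : EuclideanSpace ℝ (Fin d),
                    Real.exp (-(κ * α / 2) * ‖z - xstar‖ ^ β) * (α * L * (1 + ‖z‖ ^ a))))
          / ∫ x, Real.exp (-α * f x) ∂μ := by
  classical
  have hc : 0 < κ * α / 2 := by positivity
  set ε := Real.exp (-α * f xstar) with hε_def
  set ψ₀ : (EuclideanSpace ℝ (Fin d)) → ℝ := fun z =>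
    Real.exp (-(κ * α / 2) * ‖z - xstar‖ ^ β) * (1 + α * L * ‖z‖ + α * L * ‖z‖ ^ (a + 1))
    with hψ₀_def
  set ψ₁ : (EuclideanSpace ℝ (Fin d)) → ℝ := fun z =>
    Real.exp (-(κ * α / 2) * ‖z - xstar‖ ^ β) * (α * L * (1 + ‖z‖ ^ a)) with hψ₁_def
  -- boundedness of the two suprema
  have hbdd₀ : BddAbove (Set.range ψ₀) := by
    have hcQ : ContinuousOn (fun t : ℝ => 1 + α * L * t + α * L * t ^ (a + 1)) (Ici 0) := by
      apply ContinuousOn.add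
      · exact continuousOn_const.add (continuousOn_const.mul continuousOn_id)
      · apply continuousOn_const.mul
        intro t ht
        exact (Real.continuousAt_rpow_const t (a + 1) (Or.inr (by linarith))).continuousWithinAt
    have hnnQ : ∀ t : ℝ, 0 ≤ t → 0 ≤ 1 + α * L * t + α * L * t ^ (a + 1) := by
      intro t ht
      have h1 : (0:ℝ) ≤ t ^ (a + 1) := Real.rpow_nonneg ht _
      nlinarith [mul_nonneg (mul_nonneg hα.le hL.le) ht,
        mul_nonneg (mul_nonneg hα.le hL.le) h1]
    have htend : Tendsto (fun t : ℝ => Real.exp (-(κ * α / 2 * t))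
        * (1 + α * L * (t + ‖xstar‖) + α * L * (t + ‖xstar‖) ^ (a + 1))) atTop (nhds 0) := by
      have t1 := tendsto_exp_const (κ * α / 2) 1 hc
      have t2 := (tendsto_exp_shift 1 (κ * α / 2) ‖xstar‖ hc).const_mul (α * L)
      have t3 := (tendsto_exp_shift (a + 1) (κ * α / 2) ‖xstar‖ hc).const_mul (α * L)
      have := (t1.add t2).add t3
      simp only [mul_zero, add_zero, zero_add] at this
      refine Filter.Tendsto.congr (fun t => ?_) this
      rw [Real.rpow_one]
      ring
    obtain ⟨M, hM⟩ := exists_bound (κ * α / 2) β ‖xstar‖ hc hβ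
      (fun t => 1 + α * L * t + α * L * t ^ (a + 1)) hcQ hnnQ htend (norm_nonneg _)
    refine ⟨M, ?_⟩
    rintro v ⟨z, rfl⟩
    have hz : ‖z‖ ≤ ‖z - xstar‖ + ‖xstar‖ := by
      calc ‖z‖ = ‖z - xstar + xstar‖ := by rw [sub_add_cancel]
        _ ≤ _ := norm_add_le _ _
    have hmono : 1 + α * L * ‖z‖ + α * L * ‖z‖ ^ (a + 1)
        ≤ 1 + α * L * (‖z - xstar‖ + ‖xstar‖)
          + α * L * (‖z - xstar‖ + ‖xstar‖) ^ (a + 1) := by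
      have h2 : ‖z‖ ^ (a + 1) ≤ (‖z - xstar‖ + ‖xstar‖) ^ (a + 1) :=
        Real.rpow_le_rpow (norm_nonneg z) hz (by linarith)
      have h3 := mul_le_mul_of_nonneg_left hz (show (0:ℝ) ≤ α * L by positivity)
      have h4 := mul_le_mul_of_nonneg_left h2 (show (0:ℝ) ≤ α * L by positivity)
      linarith
    calc ψ₀ z ≤ Real.exp (-(κ * α / 2) * ‖z - xstar‖ ^ β)
          * (1 + α * L * (‖z - xstar‖ + ‖xstar‖)
            + α * L * (‖z - xstar‖ + ‖xstar‖) ^ (a + 1)) := by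
          simp only [hψ₀_def]
          exact mul_le_mul_of_nonneg_left hmono (Real.exp_nonneg _)
      _ ≤ M := hM ‖z - xstar‖ (norm_nonneg _)
  have hbdd₁ : BddAbove (Set.range ψ₁) := by
    have hcQ : ContinuousOn (fun t : ℝ => α * L * (1 + t ^ a)) (Ici 0) := by
      apply continuousOn_const.mul
      apply continuousOn_const.add
      intro t ht
      exact (Real.continuousAt_rpow_const t a (Or.inr ha.le)).continuousWithinAt
    have hnnQ : ∀ t : ℝ, 0 ≤ t → 0 ≤ α * L * (1 + t ^ a) := by
      intro t ht
      have h1 : (0:ℝ) ≤ t ^ a := Real.rpow_nonneg ht _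
      nlinarith [mul_nonneg (mul_nonneg hα.le hL.le) h1,
        mul_nonneg hα.le hL.le]
    have htend : Tendsto (fun t : ℝ => Real.exp (-(κ * α / 2 * t))
        * (α * L * (1 + (t + ‖xstar‖) ^ a))) atTop (nhds 0) := by
      have t1 := tendsto_exp_const (κ * α / 2) (α * L) hc
      have t2 := (tendsto_exp_shift a (κ * α / 2) ‖xstar‖ hc).const_mul (α * L)
      have := t1.add t2
      simp only [mul_zero, add_zero, zero_add] at this
      refine Filter.Tendsto.congr (fun t => ?_) this
      ring
    obtain ⟨M, hM⟩ := exists_bound (κ * α / 2) β ‖xstar‖ hc hβ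
      (fun t => α * L * (1 + t ^ a)) hcQ hnnQ htend (norm_nonneg _)
    refine ⟨M, ?_⟩
    rintro v ⟨z, rfl⟩
    have hz : ‖z‖ ≤ ‖z - xstar‖ + ‖xstar‖ := by
      calc ‖z‖ = ‖z - xstar + xstar‖ := by rw [sub_add_cancel]
        _ ≤ _ := norm_add_le _ _
    have hmono : α * L * (1 + ‖z‖ ^ a)
        ≤ α * L * (1 + (‖z - xstar‖ + ‖xstar‖) ^ a) := by
      have h2 : ‖z‖ ^ a ≤ (‖z - xstar‖ + ‖xstar‖) ^ a :=
        Real.rpow_le_rpow (norm_nonneg z) hz ha.le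
      have h4 := mul_le_mul_of_nonneg_left h2 (show (0:ℝ) ≤ α * L by positivity)
      nlinarith
    calc ψ₁ z ≤ Real.exp (-(κ * α / 2) * ‖z - xstar‖ ^ β)
          * (α * L * (1 + (‖z - xstar‖ + ‖xstar‖) ^ a)) := by
          simp only [hψ₁_def]
          exact mul_le_mul_of_nonneg_left hmono (Real.exp_nonneg _)
      _ ≤ M := hM ‖z - xstar‖ (norm_nonneg _)
  set S₀ := ⨆ z : (EuclideanSpace ℝ (Fin d)), ψ₀ z with hS₀_def
  set S₁ := ⨆ z : (EuclideanSpace ℝ (Fin d)), ψ₁ z with hS₁_def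
  have hψ₀S : ∀ z, ψ₀ z ≤ S₀ := fun z => le_ciSup hbdd₀ z
  have hψ₁S : ∀ z, ψ₁ z ≤ S₁ := fun z => le_ciSup hbdd₁ z
  have hψ₀nn : ∀ z, 0 ≤ ψ₀ z := by
    intro z; simp only [hψ₀_def]; positivity
  have hψ₁nn : ∀ z, 0 ≤ ψ₁ z := by
    intro z; simp only [hψ₁_def]; positivity
  have hS₀nn : 0 ≤ S₀ := le_trans (hψ₀nn 0) (hψ₀S 0)
  have hS₁nn : 0 ≤ S₁ := le_trans (hψ₁nn 0) (hψ₁S 0)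
  set C₀ := ε * S₀ with hC₀_def
  set C₁ := ε * S₁ with hC₁_def
  have hεpos : 0 < ε := Real.exp_pos _
  have hC₀nn : 0 ≤ C₀ := by positivity
  have hC₁nn : 0 ≤ C₁ := by positivity
  set h : (EuclideanSpace ℝ (Fin d)) → ℝ := fun y => Real.exp (-α * f y) with hh_def
  set g : (EuclideanSpace ℝ (Fin d)) → (EuclideanSpace ℝ (Fin d)) := fun y => Real.exp (-α * f y) • y with hg_def
  -- gradient norm vs fderiv norm
  have hgradf : ∀ z, ‖fderiv ℝ f z‖ ≤ L * (1 + ‖z‖ ^ a) := by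
    intro z
    have h1 := hgrad z
    rwa [gradient, LinearIsometryEquiv.norm_map] at h1
  have hhle2 : ∀ z, Real.exp (-α * f z)
      ≤ ε * Real.exp (-(κ * α / 2) * ‖z - xstar‖ ^ β) := by
    intro z
    rw [hε_def, ← Real.exp_add]
    apply Real.exp_le_exp.mpr
    have h1 := hgrowth z
    have h2 : (0:ℝ) ≤ ‖z - xstar‖ ^ β := Real.rpow_nonneg (norm_nonneg _) _
    nlinarith
  -- Lipschitz estimates
  have hLipg : ∀ x y : (EuclideanSpace ℝ (Fin d)), ‖g y - g x‖ ≤ C₀ * ‖y - x‖ := by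
    have key : ∀ z, HasFDerivAt g
        ((Real.exp (-α * f z)) • (ContinuousLinearMap.id ℝ (EuclideanSpace ℝ (Fin d)))
          + (Real.exp (-α * f z) • ((-α) • fderiv ℝ f z)).smulRight z) z :=
      fun z => (deriv_bounds f α hf z).2
    have bound : ∀ z, ‖(Real.exp (-α * f z)) • (ContinuousLinearMap.id ℝ (EuclideanSpace ℝ (Fin d)))
        + (Real.exp (-α * f z) • ((-α) • fderiv ℝ f z)).smulRight z‖ ≤ C₀ := by
      intro z
      have hfz := hgradf z
      have e1 : ‖Real.exp (-α * f z) • (ContinuousLinearMap.id ℝ (EuclideanSpace ℝ (Fin d)))‖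
          ≤ Real.exp (-α * f z) := by
        rw [norm_smul (Real.exp (-α * f z)) (ContinuousLinearMap.id ℝ (EuclideanSpace ℝ (Fin d)))]
        calc ‖Real.exp (-α * f z)‖ * ‖ContinuousLinearMap.id ℝ (EuclideanSpace ℝ (Fin d))‖
            ≤ ‖Real.exp (-α * f z)‖ * 1 :=
              mul_le_mul_of_nonneg_left ContinuousLinearMap.norm_id_le (norm_nonneg _)
          _ = Real.exp (-α * f z) := by rw [mul_one, Real.norm_eq_abs, Real.abs_exp]
      have e2 : ‖(Real.exp (-α * f z) • ((-α) • fderiv ℝ f z)).smulRight z‖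
          = Real.exp (-α * f z) * (α * ‖fderiv ℝ f z‖) * ‖z‖ := by
        rw [ContinuousLinearMap.norm_smulRight_apply, norm_h', abs_of_pos hα]
      calc ‖(Real.exp (-α * f z)) • (ContinuousLinearMap.id ℝ (EuclideanSpace ℝ (Fin d)))
            + (Real.exp (-α * f z) • ((-α) • fderiv ℝ f z)).smulRight z‖
          ≤ Real.exp (-α * f z) + Real.exp (-α * f z) * (α * ‖fderiv ℝ f z‖) * ‖z‖ :=
            le_trans (norm_add_le _ _) (add_le_add e1 (le_of_eq e2))
        _ = Real.exp (-α * f z) * (1 + α * ‖fderiv ℝ f z‖ * ‖z‖) := by ring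
        _ ≤ Real.exp (-α * f z) * (1 + α * L * ‖z‖ + α * L * ‖z‖ ^ (a + 1)) := by
            apply mul_le_mul_of_nonneg_left _ (Real.exp_nonneg _)
            have hra : ‖z‖ ^ a * ‖z‖ = ‖z‖ ^ (a + 1) :=
              rpow_mul_self ‖z‖ a (norm_nonneg z) ha
            have h9 : α * ‖fderiv ℝ f z‖ * ‖z‖ ≤ α * (L * (1 + ‖z‖ ^ a)) * ‖z‖ :=
              mul_le_mul_of_nonneg_right
                (mul_le_mul_of_nonneg_left hfz hα.le) (norm_nonneg z)
            have h10 : α * (L * (1 + ‖z‖ ^ a)) * ‖z‖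
                = α * L * ‖z‖ + α * L * (‖z‖ ^ a * ‖z‖) := by ring
            rw [hra] at h10
            linarith
        _ ≤ (ε * Real.exp (-(κ * α / 2) * ‖z - xstar‖ ^ β))
              * (1 + α * L * ‖z‖ + α * L * ‖z‖ ^ (a + 1)) := by
            apply mul_le_mul_of_nonneg_right (hhle2 z)
            have := Real.rpow_nonneg (norm_nonneg z) (a + 1)
            have := norm_nonneg z
            positivity
        _ = ε * ψ₀ z := by simp only [hψ₀_def]; ring
        _ ≤ ε * S₀ := mul_le_mul_of_nonneg_left (hψ₀S z) hεpos.le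
        _ = C₀ := hC₀_def.symm
    intro x y
    exact convex_univ.norm_image_sub_le_of_norm_hasFDerivWithin_le
      (fun z _ => (key z).hasFDerivWithinAt) (fun z _ => bound z) (mem_univ x) (mem_univ y)
  have hLiph : ∀ x y : (EuclideanSpace ℝ (Fin d)), ‖h y - h x‖ ≤ C₁ * ‖y - x‖ := by
    have key : ∀ z, HasFDerivAt h (Real.exp (-α * f z) • ((-α) • fderiv ℝ f z)) z :=
      fun z => (deriv_bounds f α hf z).1
    have bound : ∀ z, ‖Real.exp (-α * f z) • ((-α) • fderiv ℝ f z)‖ ≤ C₁ := by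
      intro z
      have hfz := hgradf z
      rw [norm_h', abs_of_pos hα]
      calc Real.exp (-α * f z) * (α * ‖fderiv ℝ f z‖)
          ≤ Real.exp (-α * f z) * (α * L * (1 + ‖z‖ ^ a)) := by
            have := Real.exp_nonneg (-α * f z)
            nlinarith [mul_le_mul_of_nonneg_left hfz hα.le]
        _ ≤ (ε * Real.exp (-(κ * α / 2) * ‖z - xstar‖ ^ β)) * (α * L * (1 + ‖z‖ ^ a)) := by
            apply mul_le_mul_of_nonneg_right (hhle2 z)
            have := Real.rpow_nonneg (norm_nonneg z) a
            positivity
        _ = ε * ψ₁ z := by simp only [hψ₁_def]; ring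
        _ ≤ ε * S₁ := mul_le_mul_of_nonneg_left (hψ₁S z) hεpos.le
        _ = C₁ := hC₁_def.symm
    intro x y
    exact convex_univ.norm_image_sub_le_of_norm_hasFDerivWithin_le
      (fun z _ => (key z).hasFDerivWithinAt) (fun z _ => bound z) (mem_univ x) (mem_univ y)
  -- basic facts about h, g
  have hcont_f : Continuous f := hf.continuous
  have hcont_h : Continuous h := Real.continuous_exp.comp (continuous_const.mul hcont_f)
  have hcont_g : Continuous g := hcont_h.smul continuous_id
  have hhpos : ∀ x, 0 < h x := fun x => Real.exp_pos _
  have hhle : ∀ x, h x ≤ ε := by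
    intro x
    apply Real.exp_le_exp.mpr
    have h1 := hgrowth x
    have h2 : (0:ℝ) ≤ ‖x - xstar‖ ^ β := Real.rpow_nonneg (norm_nonneg _) β
    nlinarith
  -- integrals
  set Z := ∫ x, Real.exp (-α * f x) ∂μ with hZ_def
  set Z' := ∫ x, Real.exp (-α * f x) ∂μ' with hZ'_def
  set N := ∫ x, Real.exp (-α * f x) • x ∂μ with hN_def
  set N' := ∫ x, Real.exp (-α * f x) • x ∂μ' with hN'_def
  have habs_h : ∀ x, ‖h x‖ = h x := fun x => by
    rw [Real.norm_eq_abs, abs_of_pos (hhpos x)]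
  have hint_h : Integrable h μ := by
    refine Integrable.mono' (integrable_const ε) hcont_h.aestronglyMeasurable ?_
    filter_upwards with x
    rw [habs_h]; exact hhle x
  have hint_h' : Integrable h μ' := by
    refine Integrable.mono' (integrable_const ε) hcont_h.aestronglyMeasurable ?_
    filter_upwards with x
    rw [habs_h]; exact hhle x
  have hnorm_g : ∀ x, ‖g x‖ ≤ ε * ‖x‖ := by
    intro x
    have : ‖g x‖ = h x * ‖x‖ := by
      simp only [hg_def, hh_def, norm_smul, Real.norm_eq_abs, abs_of_pos (Real.exp_pos _)]
    rw [this]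
    exact mul_le_mul_of_nonneg_right (hhle x) (norm_nonneg x)
  have hint_g : Integrable g μ := by
    refine Integrable.mono' (hmom.const_mul ε) hcont_g.aestronglyMeasurable ?_
    filter_upwards with x
    exact hnorm_g x
  have hint_g' : Integrable g μ' := by
    refine Integrable.mono' (hmom'.const_mul ε) hcont_g.aestronglyMeasurable ?_
    filter_upwards with x
    exact hnorm_g x
  have hsupp : Function.support h = Set.univ :=
    Set.eq_univ_iff_forall.mpr fun x => (hhpos x).ne'
  have hZpos : 0 < Z := by
    refine (integral_pos_iff_support_of_nonneg (fun x => (hhpos x).le) hint_h).2 ?_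
    rw [hsupp, measure_univ]; exact one_pos
  have hZ'pos : 0 < Z' := by
    refine (integral_pos_iff_support_of_nonneg (fun x => (hhpos x).le) hint_h').2 ?_
    rw [hsupp, measure_univ]; exact one_pos
  set θ := thetaAlpha α f μ with hθ_def
  set θ' := thetaAlpha α f μ' with hθ'_def
  have hNθ : N = Z • θ := by
    rw [hθ_def, thetaAlpha, smul_smul, mul_inv_cancel₀ hZpos.ne', one_smul]
  have hNθ' : N' = Z' • θ' := by
    rw [hθ'_def, thetaAlpha, smul_smul, mul_inv_cancel₀ hZ'pos.ne', one_smul]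
  -- integrability on the coupling
  have hfst : Integrable (fun p : (EuclideanSpace ℝ (Fin d)) × (EuclideanSpace ℝ (Fin d)) => ‖p.1‖) cpl := by
    have h1 : Integrable (fun x : EuclideanSpace ℝ (Fin d) => ‖x‖) (cpl.map Prod.fst) :=
      hπ1 ▸ hmom
    exact (integrable_map_measure continuous_norm.aestronglyMeasurable
      measurable_fst.aemeasurable).mp h1
  have hsnd : Integrable (fun p : (EuclideanSpace ℝ (Fin d)) × (EuclideanSpace ℝ (Fin d)) => ‖p.2‖) cpl := by
    have h1 : Integrable (fun x : EuclideanSpace ℝ (Fin d) => ‖x‖) (cpl.map Prod.snd) :=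
      hπ2 ▸ hmom'
    exact (integrable_map_measure continuous_norm.aestronglyMeasurable
      measurable_snd.aemeasurable).mp h1
  have hint_h1 : Integrable (fun p : (EuclideanSpace ℝ (Fin d)) × (EuclideanSpace ℝ (Fin d)) => h p.1) cpl := by
    refine Integrable.mono' (integrable_const ε)
      ((hcont_h.comp continuous_fst).aestronglyMeasurable) ?_
    filter_upwards with p
    rw [habs_h]; exact hhle _
  have hint_h2 : Integrable (fun p : (EuclideanSpace ℝ (Fin d)) × (EuclideanSpace ℝ (Fin d)) => h p.2) cpl := by
    refine Integrable.mono' (integrable_const ε)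
      ((hcont_h.comp continuous_snd).aestronglyMeasurable) ?_
    filter_upwards with p
    rw [habs_h]; exact hhle _
  have hint_g1 : Integrable (fun p : (EuclideanSpace ℝ (Fin d)) × (EuclideanSpace ℝ (Fin d)) => g p.1) cpl := by
    refine Integrable.mono' (hfst.const_mul ε)
      ((hcont_g.comp continuous_fst).aestronglyMeasurable) ?_
    filter_upwards with p
    exact hnorm_g p.1
  have hint_g2 : Integrable (fun p : (EuclideanSpace ℝ (Fin d)) × (EuclideanSpace ℝ (Fin d)) => g p.2) cpl := by
    refine Integrable.mono' (hsnd.const_mul ε)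
      ((hcont_g.comp continuous_snd).aestronglyMeasurable) ?_
    filter_upwards with p
    exact hnorm_g p.2
  have hW : Integrable (fun p : (EuclideanSpace ℝ (Fin d)) × (EuclideanSpace ℝ (Fin d)) => ‖p.1 - p.2‖) cpl := by
    refine Integrable.mono' (hfst.add hsnd)
      ((continuous_fst.sub continuous_snd).norm.aestronglyMeasurable) ?_
    filter_upwards with p
    rw [norm_norm]; exact norm_sub_le _ _
  -- marginal identities
  have I1 : ∫ p, h p.1 ∂cpl = Z := by
    rw [hZ_def, ← hπ1,
      integral_map measurable_fst.aemeasurable hcont_h.aestronglyMeasurable]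
  have I2 : ∫ p, h p.2 ∂cpl = Z' := by
    rw [hZ'_def, ← hπ2,
      integral_map measurable_snd.aemeasurable hcont_h.aestronglyMeasurable]
  have I3 : ∫ p, g p.1 ∂cpl = N := by
    rw [hN_def, ← hπ1,
      integral_map measurable_fst.aemeasurable hcont_g.aestronglyMeasurable]
  have I4 : ∫ p, g p.2 ∂cpl = N' := by
    rw [hN'_def, ← hπ2,
      integral_map measurable_snd.aemeasurable hcont_g.aestronglyMeasurable]
  -- the key integrand
  set G : (EuclideanSpace ℝ (Fin d)) × (EuclideanSpace ℝ (Fin d)) → (EuclideanSpace ℝ (Fin d)) := fun p => g p.1 - g p.2 + (h p.2 - h p.1) • θ' with hG_def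
  have hint_G : Integrable G cpl :=
    ((hint_g1.sub hint_g2).add ((hint_h2.sub hint_h1).smul_const θ'))
  have hIG : ∫ p, G p ∂cpl = Z • (θ - θ') := by
    have e1 : ∫ p, G p ∂cpl
        = (∫ p, (g p.1 - g p.2) ∂cpl) + ∫ p, (h p.2 - h p.1) • θ' ∂cpl :=
      integral_add (hint_g1.sub hint_g2) ((hint_h2.sub hint_h1).smul_const θ')
    have e2 : ∫ p, (g p.1 - g p.2) ∂cpl = N - N' := by
      rw [integral_sub hint_g1 hint_g2, I3, I4]
    have e3 : ∫ p, (h p.2 - h p.1) • θ' ∂cpl = (Z' - Z) • θ' := by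
      rw [integral_smul_const, integral_sub hint_h2 hint_h1, I1, I2]
    rw [e1, e2, e3, hNθ, hNθ', sub_smul, smul_sub]
    abel
  -- pointwise bound on ‖G‖
  have hGbound : ∀ p : (EuclideanSpace ℝ (Fin d)) × (EuclideanSpace ℝ (Fin d)), ‖G p‖ ≤ (C₀ + ‖θ'‖ * C₁) * ‖p.1 - p.2‖ := by
    intro p
    have h1 : ‖G p‖ ≤ ‖g p.1 - g p.2‖ + ‖(h p.2 - h p.1) • θ'‖ := norm_add_le _ _
    have h2 : ‖g p.1 - g p.2‖ ≤ C₀ * ‖p.1 - p.2‖ := hLipg p.2 p.1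
    have h3 : ‖(h p.2 - h p.1) • θ'‖ = ‖h p.2 - h p.1‖ * ‖θ'‖ := by
      rw [norm_smul]
    have h4 : ‖h p.2 - h p.1‖ ≤ C₁ * ‖p.2 - p.1‖ := hLiph p.1 p.2
    rw [norm_sub_rev p.2 p.1] at h4
    have h5 : ‖h p.2 - h p.1‖ * ‖θ'‖ ≤ C₁ * ‖p.1 - p.2‖ * ‖θ'‖ :=
      mul_le_mul_of_nonneg_right h4 (norm_nonneg _)
    calc ‖G p‖ ≤ ‖g p.1 - g p.2‖ + ‖h p.2 - h p.1‖ * ‖θ'‖ := by rw [← h3]; exact h1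
      _ ≤ C₀ * ‖p.1 - p.2‖ + C₁ * ‖p.1 - p.2‖ * ‖θ'‖ := add_le_add h2 h5
      _ = (C₀ + ‖θ'‖ * C₁) * ‖p.1 - p.2‖ := by ring
  -- conclude
  have hnorm : ‖∫ p, G p ∂cpl‖ ≤ (C₀ + ‖θ'‖ * C₁) * ∫ p, ‖p.1 - p.2‖ ∂cpl := by
    calc ‖∫ p, G p ∂cpl‖ ≤ ∫ p, ‖G p‖ ∂cpl := norm_integral_le_integral_norm _
      _ ≤ ∫ p, (C₀ + ‖θ'‖ * C₁) * ‖p.1 - p.2‖ ∂cpl := by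
          apply integral_mono hint_G.norm (hW.const_mul _) hGbound
      _ = (C₀ + ‖θ'‖ * C₁) * ∫ p, ‖p.1 - p.2‖ ∂cpl := integral_const_mul _ _
  have hθsub : θ - θ' = Z⁻¹ • ∫ p, G p ∂cpl := by
    rw [hIG, smul_smul, inv_mul_cancel₀ hZpos.ne', one_smul]
  have hWnn : 0 ≤ ∫ p, ‖p.1 - p.2‖ ∂cpl := integral_nonneg (fun p => norm_nonneg _)
  rw [hθsub, norm_smul, norm_inv, Real.norm_eq_abs, abs_of_pos hZpos]
  calc Z⁻¹ * ‖∫ p, G p ∂cpl‖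
      ≤ Z⁻¹ * ((C₀ + ‖θ'‖ * C₁) * ∫ p, ‖p.1 - p.2‖ ∂cpl) :=
        mul_le_mul_of_nonneg_left hnorm (by positivity)
    _ = (∫ p, ‖p.1 - p.2‖ ∂cpl) * (C₀ + ‖θ'‖ * C₁) / Z := by
        rw [div_eq_mul_inv]; ring
end

section
/- Let Assumptions 1 and 2 hold. Let K > 0 with γ > 4K/(κ δ^{β−1}) and m0 ∈ B(x*, K/2). For t ≥ 0 with γ_t ≥ γ/2 and for z in the closed ball B̄(x*, K), let p_t(z) denote the unique global minimizer over ℝ^d of y ↦ f(y) + ‖y − z‖²/(2γ_t). Then for every x ∈ B(x*, K/2) and every t ≥ 0 with γ_t ≥ γ/2: ‖p_t(x) − p_t(m_t(x))‖ ≤ ‖m0 − x*‖ e^{−t}. -/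
open MeasureTheory Real Set RealInnerProductSpace

lemma combo_sq {E : Type*} [NormedAddCommGroup E] [InnerProductSpace ℝ E]
    (a b : ℝ) (hab : a + b = 1) (x y : E) :
    ‖a • x + b • y‖ ^ 2 = a * ‖x‖ ^ 2 + b * ‖y‖ ^ 2 - a * b * ‖x - y‖ ^ 2 := by
  have h1 : ∀ v : E, ‖v‖ ^ 2 = ⟪v, v⟫ := fun v => (real_inner_self_eq_norm_sq v).symm
  rw [h1, h1, h1, h1]
  simp only [inner_add_add_self, inner_sub_sub_self, real_inner_smul_left, real_inner_smul_right]
  have hb : b = 1 - a := by linarith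
  subst hb; ring

lemma strong_min {E : Type*} [NormedAddCommGroup E] [InnerProductSpace ℝ E]
    {S : Set E} {G : E → ℝ} {c : ℝ} (hc : 0 ≤ c)
    (hG : ConvexOn ℝ S (fun y => G y - c / 2 * ‖y‖ ^ 2))
    {p : E} (hmin : ∀ y ∈ S, G p ≤ G y) (hp : p ∈ S)
    {y : E} (hy : y ∈ S) : G p + c / 2 * ‖y - p‖ ^ 2 ≤ G y := by
  set q := ‖y - p‖ ^ 2 with hqdef
  have hq : 0 ≤ q := sq_nonneg _
  have hstep : ∀ s : ℝ, 0 < s → s ≤ 1 → G p + c / 2 * ((1 - s) * q) ≤ G y := by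
    intro s hs hs1
    have hcomb := hG.2 hy hp hs.le (by linarith : (0:ℝ) ≤ 1 - s) (by ring)
    have hw : s • y + (1 - s) • p ∈ S := hG.1 hy hp hs.le (by linarith) (by ring)
    have hGw : G p ≤ G (s • y + (1 - s) • p) := hmin _ hw
    have hid := combo_sq s (1 - s) (by ring) y p
    rw [← hqdef] at hid
    have h2 : s * (c / 2 * ((1 - s) * q)) ≤ s * (G y - G p) := by
      simp only [smul_eq_mul] at hcomb
      rw [hid] at hcomb
      nlinarith [hGw, hcomb]
    have h3 := (mul_le_mul_iff_right₀ hs).mp h2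
    linarith
  by_contra hcon
  push_neg at hcon
  have hD0 : 0 ≤ G y - G p := by have := hmin y hy; linarith
  set D := G y - G p with hDdef
  have hDlt : D < c / 2 * q := by linarith
  rcases eq_or_lt_of_le (mul_nonneg hc hq) with hcq | hcq
  · have := hstep 1 one_pos le_rfl
    nlinarith
  · set s := min (1/2 : ℝ) ((c * q / 2 - D) / (c * q)) with hsdef
    have hnum : 0 < c * q / 2 - D := by nlinarith
    have hspos : 0 < s := lt_min (by norm_num) (div_pos hnum hcq)
    have hsle : s ≤ 1 := le_trans (min_le_left _ _) (by norm_num)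
    have h1 := hstep s hspos hsle
    have h4 : s ≤ (c * q / 2 - D) / (c * q) := min_le_right _ _
    have h5 : s * (c * q) ≤ c * q / 2 - D := (le_div_iff₀ hcq).mp h4
    nlinarith

lemma loc_lemma {d : ℕ} (f : EuclideanSpace ℝ (Fin d) → ℝ) (xstar : EuclideanSpace ℝ (Fin d))
    (κ β : ℝ) (hκ : 0 < κ) (hβ : 1 ≤ β)
    (hgrowth : ∀ x, f xstar + κ / 2 * ‖x - xstar‖ ^ β ≤ f x)
    (δ : ℝ) (hδ : 0 < δ) (K : ℝ) (hK : 0 < K) (γ : ℝ) (hγ : 4 * K / (κ * δ ^ (β - 1)) < γ)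
    (gt : ℝ) (hgt : γ / 2 ≤ gt)
    (z : EuclideanSpace ℝ (Fin d)) (hz : ‖z - xstar‖ ≤ K)
    (p : EuclideanSpace ℝ (Fin d))
    (hp : ∀ y, f p + ‖p - z‖ ^ 2 / (2 * gt) ≤ f y + ‖y - z‖ ^ 2 / (2 * gt)) :
    ‖p - xstar‖ < δ := by
  have hδpow : 0 < δ ^ (β - 1) := Real.rpow_pos_of_pos hδ _
  have hγ0 : 0 < γ := lt_trans (by positivity) hγ
  have hgt0 : 0 < gt := by linarith
  set r := ‖p - xstar‖ with hrdef
  have hr : 0 ≤ r := norm_nonneg _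
  have h1 := hp xstar
  have h2 := hgrowth p
  have hzx : ‖xstar - z‖ ≤ K := by rw [norm_sub_rev]; exact hz
  have hnum : ‖xstar - z‖ ^ 2 - ‖p - z‖ ^ 2 ≤ 2 * K * r := by
    by_cases hc : ‖xstar - z‖ ≤ r
    · nlinarith [sq_nonneg ‖p - z‖, norm_nonneg (xstar - z)]
    · push_neg at hc
      have htri : ‖xstar - z‖ ≤ ‖xstar - p‖ + ‖p - z‖ := norm_sub_le_norm_sub_add_norm_sub _ _ _
      have hxp : ‖xstar - p‖ = r := norm_sub_rev p xstar ▸ rfl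
      rw [hxp] at htri
      nlinarith [norm_nonneg (p - z)]
  have hmain : κ / 2 * r ^ β ≤ 2 * K * r / (2 * gt) := by
    have hA : κ / 2 * r ^ β ≤ ‖xstar - z‖ ^ 2 / (2 * gt) - ‖p - z‖ ^ 2 / (2 * gt) := by
      linarith
    rw [div_sub_div_same] at hA
    calc κ / 2 * r ^ β ≤ (‖xstar - z‖ ^ 2 - ‖p - z‖ ^ 2) / (2 * gt) := hA
      _ ≤ 2 * K * r / (2 * gt) := by
          exact div_le_div_of_nonneg_right hnum (by positivity)
  by_contra hcon
  push_neg at hcon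
  have hr0 : 0 < r := lt_of_lt_of_le hδ hcon
  have hsplit : r ^ β = r ^ (β - 1) * r := by
    rw [show β = (β - 1) + 1 by ring, Real.rpow_add_one hr0.ne']
    ring_nf
  have hrpow : 0 < r ^ (β - 1) := Real.rpow_pos_of_pos hr0 _
  have hm2 : κ / 2 * (r ^ (β - 1) * r) * (2 * gt) ≤ 2 * K * r := by
    rw [hsplit] at hmain
    exact (le_div_iff₀ (by positivity)).mp hmain
  have hm3 : κ * r ^ (β - 1) * gt ≤ 2 * K := by
    have : (κ * r ^ (β - 1) * gt) * r ≤ (2 * K) * r := by nlinarith [hm2]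
    exact le_of_mul_le_mul_right this hr0
  have hδr : δ ^ (β - 1) ≤ r ^ (β - 1) := Real.rpow_le_rpow hδ.le hcon (by linarith)
  have hγK : 4 * K < γ * (κ * δ ^ (β - 1)) := by
    have := (div_lt_iff₀ (by positivity : (0:ℝ) < κ * δ ^ (β - 1))).mp hγ
    nlinarith
  nlinarith [mul_le_mul_of_nonneg_right (mul_le_mul_of_nonneg_left hδr hκ.le) hgt0.le,
    mul_le_mul_of_nonneg_left hgt (by positivity : (0:ℝ) ≤ κ * δ ^ (β - 1))]


set_option maxHeartbeats 1000000 in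
/-- Lemma 5: `‖p_t(x) − p_t(m_t(x))‖ ≤ ‖m0 − x*‖ e^{−t}`, where `p_t(z)`
is the unique global minimizer of `y ↦ f(y) + ‖y − z‖²/(2γ_t)`. -/
theorem stmt10 {d : ℕ}
    (f : EuclideanSpace ℝ (Fin d) → ℝ) (xstar : EuclideanSpace ℝ (Fin d))
    (a L κ β : ℝ) (hf : ContDiff ℝ 1 f) (ha : 0 < a) (hL : 0 < L)
    (hgrad : ∀ x, ‖gradient f x‖ ≤ L * (1 + ‖x‖ ^ a))
    (hκ : 0 < κ) (hβ : 1 ≤ β)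
    (hgrowth : ∀ x, f xstar + κ / 2 * ‖x - xstar‖ ^ β ≤ f x)
    (hmin : ∀ x, x ≠ xstar → f xstar < f x)
    (hf3 : ContDiff ℝ 3 f) (δ lam : ℝ) (hδ : 0 < δ) (hlam : 0 < lam)
    (hconv : ConvexOn ℝ (Metric.ball xstar δ) (fun y => f y - lam / 2 * ‖y‖ ^ 2))
    (γ K : ℝ) (hK : 0 < K) (hγ : 4 * K / (κ * δ ^ (β - 1)) < γ)
    (m0 : EuclideanSpace ℝ (Fin d)) (hm0 : m0 ∈ Metric.ball xstar (K / 2))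
    (σ0sq : ℝ) (hσ0 : 0 ≤ σ0sq) (α : ℝ) (hα : 0 < α) :
    ∀ x ∈ Metric.ball xstar (K / 2), ∀ t : ℝ, 0 ≤ t →
      γ / 2 ≤ α * σ0sq * Real.exp (-2 * t) + (1 - Real.exp (-2 * t)) * γ →
      ∀ p1 p2 : EuclideanSpace ℝ (Fin d),
        IsMinOn (fun y => f y
            + ‖y - x‖ ^ 2
              / (2 * (α * σ0sq * Real.exp (-2 * t) + (1 - Real.exp (-2 * t)) * γ)))
          Set.univ p1 →
        IsMinOn (fun y => f y
            + ‖y - (Real.exp (-t) • (m0 - xstar) + x)‖ ^ 2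
              / (2 * (α * σ0sq * Real.exp (-2 * t) + (1 - Real.exp (-2 * t)) * γ)))
          Set.univ p2 →
        ‖p1 - p2‖ ≤ ‖m0 - xstar‖ * Real.exp (-t) := by
  intro x hx t ht hgtγ p1 p2 hp1 hp2
  set gt := α * σ0sq * Real.exp (-2 * t) + (1 - Real.exp (-2 * t)) * γ with hgtdef
  clear_value gt
  have hδpow : 0 < δ ^ (β - 1) := Real.rpow_pos_of_pos hδ _
  have hγ0 : 0 < γ := lt_trans (by positivity) hγ
  have hgt0 : 0 < gt := by linarith
  set z1 := x with hz1def
  set z2 := Real.exp (-t) • (m0 - xstar) + x with hz2def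
  clear_value z2
  have hx' : ‖x - xstar‖ < K / 2 := by
    rw [← dist_eq_norm]; exact Metric.mem_ball.mp hx
  have hm0' : ‖m0 - xstar‖ < K / 2 := by
    rw [← dist_eq_norm]; exact Metric.mem_ball.mp hm0
  have hexp1 : Real.exp (-t) ≤ 1 := Real.exp_le_one_iff.mpr (by linarith)
  have hexppos : 0 < Real.exp (-t) := Real.exp_pos _
  have hz1K : ‖z1 - xstar‖ ≤ K := by rw [hz1def]; linarith
  have hz2K : ‖z2 - xstar‖ ≤ K := by
    have heq : z2 - xstar = Real.exp (-t) • (m0 - xstar) + (x - xstar) := by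
      rw [hz2def]; abel
    rw [heq]
    have h1 : ‖Real.exp (-t) • (m0 - xstar) + (x - xstar)‖
        ≤ ‖Real.exp (-t) • (m0 - xstar)‖ + ‖x - xstar‖ := norm_add_le _ _
    have h2 : ‖Real.exp (-t) • (m0 - xstar)‖ = Real.exp (-t) * ‖m0 - xstar‖ := by
      rw [norm_smul, Real.norm_eq_abs, abs_of_pos hexppos]
    nlinarith [norm_nonneg (m0 - xstar)]
  have hmin1 : ∀ y, f p1 + ‖p1 - z1‖ ^ 2 / (2 * gt) ≤ f y + ‖y - z1‖ ^ 2 / (2 * gt) :=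
    fun y => isMinOn_iff.mp hp1 y (Set.mem_univ y)
  have hmin2 : ∀ y, f p2 + ‖p2 - z2‖ ^ 2 / (2 * gt) ≤ f y + ‖y - z2‖ ^ 2 / (2 * gt) :=
    fun y => isMinOn_iff.mp hp2 y (Set.mem_univ y)
  have hP1δ : p1 ∈ Metric.ball xstar δ := by
    rw [Metric.mem_ball, dist_eq_norm]
    exact loc_lemma f xstar κ β hκ hβ hgrowth δ hδ K hK γ hγ gt hgtγ z1 hz1K p1 hmin1
  have hP2δ : p2 ∈ Metric.ball xstar δ := by
    rw [Metric.mem_ball, dist_eq_norm]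
    exact loc_lemma f xstar κ β hκ hβ hgrowth δ hδ K hK γ hγ gt hgtγ z2 hz2K p2 hmin2
  have hball : Convex ℝ (Metric.ball xstar δ) := convex_ball _ _
  have hsq : ConvexOn ℝ (Metric.ball xstar δ)
      (fun y : EuclideanSpace ℝ (Fin d) => lam / 2 * ‖y‖ ^ 2) := by
    refine ⟨hball, ?_⟩
    intro u hu v hv aa bb haa hbb hab
    simp only [smul_eq_mul]
    have hid := combo_sq aa bb hab u v
    nlinarith [mul_nonneg (mul_nonneg haa hbb) (sq_nonneg ‖u - v‖)]
  have hfconv : ConvexOn ℝ (Metric.ball xstar δ) f := by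
    have h := hconv.add hsq
    have h2 : ((fun y => f y - lam / 2 * ‖y‖ ^ 2)
        + fun y : EuclideanSpace ℝ (Fin d) => lam / 2 * ‖y‖ ^ 2) = f := by
      funext y; simp
    rwa [h2] at h
  have hGconv : ∀ z : EuclideanSpace ℝ (Fin d), ConvexOn ℝ (Metric.ball xstar δ)
      (fun y => (f y + ‖y - z‖ ^ 2 / (2 * gt)) - 1 / gt / 2 * ‖y‖ ^ 2) := by
    intro z
    have hlin : ConvexOn ℝ (Metric.ball xstar δ)
        (fun y : EuclideanSpace ℝ (Fin d) => (-(1 / gt)) * ⟪y, z⟫ + ‖z‖ ^ 2 / (2 * gt)) := by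
      refine ⟨hball, ?_⟩
      intro u hu v hv aa bb haa hbb hab
      apply le_of_eq
      simp only [smul_eq_mul, inner_add_left, real_inner_smul_left]
      rw [show bb = 1 - aa by linarith]
      ring
    have h := hfconv.add hlin
    convert h using 1
    · rfl
    funext y
    have hns : ‖y - z‖ ^ 2 = ‖y‖ ^ 2 - 2 * ⟪y, z⟫ + ‖z‖ ^ 2 := norm_sub_sq_real y z
    rw [hns, Pi.add_apply]
    field_simp
    ring
  have Q1 := strong_min (G := fun y => f y + ‖y - z1‖ ^ 2 / (2 * gt))
    (by positivity : (0:ℝ) ≤ 1 / gt) (hGconv z1) (fun y _ => hmin1 y) hP1δ hP2δ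
  have Q2 := strong_min (G := fun y => f y + ‖y - z2‖ ^ 2 / (2 * gt))
    (by positivity : (0:ℝ) ≤ 1 / gt) (hGconv z2) (fun y _ => hmin2 y) hP2δ hP1δ
  have hq21 : ‖p2 - p1‖ = ‖p1 - p2‖ := norm_sub_rev _ _
  rw [hq21] at Q1
  set q := ‖p1 - p2‖ ^ 2 with hqdef
  clear_value q
  have hsum : ‖p1 - z1‖ ^ 2 / (2 * gt) + ‖p2 - z2‖ ^ 2 / (2 * gt) + 1 / gt * q
      ≤ ‖p2 - z1‖ ^ 2 / (2 * gt) + ‖p1 - z2‖ ^ 2 / (2 * gt) := by linarith [Q1, Q2]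
  have h2q : 1 / gt * q = 2 * q / (2 * gt) := by field_simp
  have hsum' : (‖p1 - z1‖ ^ 2 + ‖p2 - z2‖ ^ 2 + 2 * q) / (2 * gt)
      ≤ (‖p2 - z1‖ ^ 2 + ‖p1 - z2‖ ^ 2) / (2 * gt) := by
    rw [add_div, add_div, add_div]
    linarith [hsum, h2q]
  have hsum2 : ‖p1 - z1‖ ^ 2 + ‖p2 - z2‖ ^ 2 + 2 * q ≤ ‖p2 - z1‖ ^ 2 + ‖p1 - z2‖ ^ 2 :=
    (div_le_div_iff_of_pos_right (by positivity)).mp hsum'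
  have e : ∀ u v : EuclideanSpace ℝ (Fin d), ‖u - v‖ ^ 2 = ‖u‖ ^ 2 - 2 * ⟪u, v⟫ + ‖v‖ ^ 2 :=
    fun u v => norm_sub_sq_real u v
  have hinner : q ≤ ⟪p2 - p1, z2 - z1⟫ := by
    rw [inner_sub_left, inner_sub_right, inner_sub_right]
    have eq12 := e p1 p2
    rw [← hqdef] at eq12
    linarith [hsum2, e p1 z1, e p2 z1, e p1 z2, e p2 z2, eq12]
  have hz21 : z2 - z1 = Real.exp (-t) • (m0 - xstar) := by
    rw [hz1def, hz2def]; abel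
  have hzn : ‖z2 - z1‖ = ‖m0 - xstar‖ * Real.exp (-t) := by
    rw [hz21, norm_smul, Real.norm_eq_abs, abs_of_pos hexppos]; ring
  have hCS : ⟪p2 - p1, z2 - z1⟫ ≤ ‖p2 - p1‖ * ‖z2 - z1‖ := real_inner_le_norm _ _
  rw [hq21, hzn] at hCS
  have hfin : q ≤ ‖p1 - p2‖ * (‖m0 - xstar‖ * Real.exp (-t)) := le_trans hinner hCS
  rcases eq_or_lt_of_le (norm_nonneg (p1 - p2)) with h0 | h0
  · rw [← h0]
    positivity
  · exact le_of_mul_le_mul_left (by rw [hqdef, sq] at hfin; exact hfin) h0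
end

section
/- Let Assumptions 1 and 2 hold and assume R ≥ ‖x*‖ + δ. Let K > 0, let γ > 4K/(δ^{β−1} κ), let s ≥ γ/2, and let x ∈ B(x*, K/2). Let p be the unique global minimizer over ℝ^d of y ↦ f(y) + ‖y − x‖²/(2s). Then ‖p‖ ≤ R, and consequently clip_R(p) = p. -/
open MeasureTheory Real Set

/-- Lemma 6: the proximal point is left unchanged by clipping:
if `p` is the unique global minimizer of `y ↦ f(y) + ‖y − x‖²/(2s)` with `s ≥ γ/2` and
`x ∈ B(x*, K/2)`, then `‖p‖ ≤ R` and `clip_R(p) = p`. -/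
theorem stmt11 {d : ℕ}
    (f : EuclideanSpace ℝ (Fin d) → ℝ) (xstar : EuclideanSpace ℝ (Fin d))
    (a L κ β : ℝ) (hf : ContDiff ℝ 1 f) (ha : 0 < a) (hL : 0 < L)
    (hgrad : ∀ x, ‖gradient f x‖ ≤ L * (1 + ‖x‖ ^ a))
    (hκ : 0 < κ) (hβ : 1 ≤ β)
    (hgrowth : ∀ x, f xstar + κ / 2 * ‖x - xstar‖ ^ β ≤ f x)
    (hmin : ∀ x, x ≠ xstar → f xstar < f x)
    (hf3 : ContDiff ℝ 3 f) (δ lam : ℝ) (hδ : 0 < δ) (hlam : 0 < lam)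
    (hconv : ConvexOn ℝ (Metric.ball xstar δ) (fun y => f y - lam / 2 * ‖y‖ ^ 2))
    (R : ℝ) (hR : ‖xstar‖ + δ ≤ R)
    (K γ : ℝ) (hK : 0 < K) (hγ : 4 * K / (δ ^ (β - 1) * κ) < γ)
    (s : ℝ) (hs : γ / 2 ≤ s)
    (x : EuclideanSpace ℝ (Fin d)) (hx : x ∈ Metric.ball xstar (K / 2))
    (p : EuclideanSpace ℝ (Fin d))
    (hp : IsMinOn (fun y => f y + ‖y - x‖ ^ 2 / (2 * s)) Set.univ p) :
    ‖p‖ ≤ R ∧ clipR R p = p := by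
  have hDpos : (0:ℝ) < δ ^ (β - 1) := Real.rpow_pos_of_pos hδ _
  have hγpos : 0 < γ := lt_trans (by positivity) hγ
  have hspos : 0 < s := lt_of_lt_of_le (by positivity) hs
  have h2s : (0:ℝ) < 2 * s := by linarith
  have h1 : f p + ‖p - x‖ ^ 2 / (2 * s) ≤ f xstar + ‖xstar - x‖ ^ 2 / (2 * s) := by
    simpa using hp (Set.mem_univ xstar)
  have hAnn : (0:ℝ) ≤ ‖p - xstar‖ ^ β := Real.rpow_nonneg (norm_nonneg _) _
  have hgrow := hgrowth p
  have hfp : f xstar ≤ f p := by nlinarith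
  have hb : ‖p - x‖ ≤ ‖xstar - x‖ := by
    have h2 : ‖p - x‖ ^ 2 / (2 * s) ≤ ‖xstar - x‖ ^ 2 / (2 * s) := by linarith
    have h3 : ‖p - x‖ ^ 2 ≤ ‖xstar - x‖ ^ 2 := (div_le_div_iff_of_pos_right h2s).mp h2
    nlinarith [norm_nonneg (p - x), norm_nonneg (xstar - x)]
  have hxK : ‖xstar - x‖ < K / 2 := by
    have := Metric.mem_ball.mp hx
    rw [dist_eq_norm] at this
    rwa [norm_sub_rev]
  have htri : ‖xstar - x‖ ≤ ‖p - xstar‖ + ‖p - x‖ := by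
    calc ‖xstar - x‖ ≤ ‖xstar - p‖ + ‖p - x‖ := norm_sub_le_norm_sub_add_norm_sub _ _ _
    _ = ‖p - xstar‖ + ‖p - x‖ := by rw [norm_sub_rev]
  have h4 : f p - f xstar ≤ (‖xstar - x‖ ^ 2 - ‖p - x‖ ^ 2) / (2 * s) := by
    rw [sub_div]; linarith
  have h5 : ‖xstar - x‖ ^ 2 - ‖p - x‖ ^ 2 ≤ ‖p - xstar‖ * K := by
    have h51 : ‖xstar - x‖ - ‖p - x‖ ≤ ‖p - xstar‖ := by linarith
    have h52 : ‖xstar - x‖ + ‖p - x‖ ≤ K := by linarith [norm_nonneg (p - x)]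
    nlinarith [mul_le_mul h51 h52 (by linarith [norm_nonneg (p - x)]) (norm_nonneg (p - xstar))]
  have key : κ / 2 * ‖p - xstar‖ ^ β ≤ ‖p - xstar‖ * K / γ := by
    have h6 : κ / 2 * ‖p - xstar‖ ^ β ≤ (‖xstar - x‖ ^ 2 - ‖p - x‖ ^ 2) / (2 * s) := by
      linarith
    have h7 : (‖xstar - x‖ ^ 2 - ‖p - x‖ ^ 2) / (2 * s) ≤ ‖p - xstar‖ * K / (2 * s) :=
      (div_le_div_iff_of_pos_right h2s).mpr h5
    have h8 : ‖p - xstar‖ * K / (2 * s) ≤ ‖p - xstar‖ * K / γ :=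
      div_le_div_of_nonneg_left (by positivity) hγpos (by linarith)
    linarith
  have hAδ : ‖p - xstar‖ < δ := by
    by_contra hcon
    push_neg at hcon
    have hApos : 0 < ‖p - xstar‖ := lt_of_lt_of_le hδ hcon
    have hrw : ‖p - xstar‖ ^ β = ‖p - xstar‖ ^ (β - 1) * ‖p - xstar‖ := by
      rw [show β = (β - 1) + 1 by ring, Real.rpow_add hApos, Real.rpow_one]
      ring_nf
    have hmono : δ ^ (β - 1) ≤ ‖p - xstar‖ ^ (β - 1) :=
      Real.rpow_le_rpow (le_of_lt hδ) hcon (by linarith)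
    have e1 : δ ^ (β - 1) * ‖p - xstar‖ ≤ ‖p - xstar‖ ^ β := by
      rw [hrw]; exact mul_le_mul_of_nonneg_right hmono (norm_nonneg _)
    have key2 : κ / 2 * ‖p - xstar‖ ^ β * γ ≤ ‖p - xstar‖ * K := by
      rw [← le_div_iff₀ hγpos]; exact key
    have e2 : κ / 2 * (δ ^ (β - 1) * ‖p - xstar‖) ≤ κ / 2 * ‖p - xstar‖ ^ β :=
      mul_le_mul_of_nonneg_left e1 (by positivity)
    have e3 : κ / 2 * (δ ^ (β - 1) * ‖p - xstar‖) * γ ≤ ‖p - xstar‖ * K :=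
      le_trans (mul_le_mul_of_nonneg_right e2 (le_of_lt hγpos)) key2
    have e4 : 4 * K < γ * (δ ^ (β - 1) * κ) := (div_lt_iff₀ (by positivity)).mp hγ
    have e5 : ‖p - xstar‖ * (4 * K) < ‖p - xstar‖ * (γ * (δ ^ (β - 1) * κ)) :=
      mul_lt_mul_of_pos_left e4 hApos
    have e6 : 0 < ‖p - xstar‖ * K := mul_pos hApos hK
    linarith
  have hnormp : ‖p‖ ≤ R := by
    have : ‖p‖ ≤ ‖p - xstar‖ + ‖xstar‖ := by
      simpa using norm_add_le (p - xstar) xstar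
    linarith
  refine ⟨hnormp, ?_⟩
  by_cases hp0 : p = 0
  · simp [clipR, hp0]
  · have hpn : ‖p‖ ≠ 0 := norm_ne_zero_iff.mpr hp0
    simp [clipR, hp0, min_eq_right hnormp, div_self hpn]
end

section
/- Let d ≥ 1, let α, γ, r > 0, let m, x* ∈ ℝ^d, and let σ² satisfy γ/(2α) ≤ σ² ≤ γ/α. Let Z be a random vector with law the Gaussian measure on ℝ^d with mean m and covariance σ² I_d. Then P(‖Z − x*‖ ≥ r) ≤ 1 − V_d · (r√α)^d · (2πγ)^{−d/2} · exp( −(4α/γ)(‖m − x*‖² + r²) ), where V_d denotes the Lebesgue volume of the unit Euclidean ball in ℝ^d. -/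
open MeasureTheory Real Set

/-- Gaussian small-ball/tail estimate:
`P(‖Z − x*‖ ≥ r) ≤ 1 − V_d (r√α)^d (2πγ)^{−d/2} exp(−(4α/γ)(‖m − x*‖² + r²))`. -/
theorem stmt16 {d : ℕ} (hd : 1 ≤ d) (α γ r : ℝ) (hα : 0 < α) (hγ : 0 < γ) (hr : 0 < r)
    (m xstar : EuclideanSpace ℝ (Fin d)) (σ2 : ℝ)
    (hσl : γ / (2 * α) ≤ σ2) (hσu : σ2 ≤ γ / α)
    (Ω : Type) [MeasurableSpace Ω] (P : Measure Ω) [IsProbabilityMeasure P]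
    (Z : Ω → EuclideanSpace ℝ (Fin d)) (hZ : Measurable Z)
    (hlaw : P.map Z = gaussianE d m σ2) :
    (P {ω | r ≤ ‖Z ω - xstar‖}).toReal
      ≤ 1 - (volume (Metric.ball (0 : EuclideanSpace ℝ (Fin d)) 1)).toReal
          * (r * Real.sqrt α) ^ d * (2 * Real.pi * γ) ^ (-(d : ℝ) / 2)
          * Real.exp (-(4 * α / γ) * (‖m - xstar‖ ^ 2 + r ^ 2)) := by
  have hσ2 : 0 < σ2 := lt_of_lt_of_le (by positivity) hσl
  set S : ℝ := ‖m - xstar‖ ^ 2 + r ^ 2 with hS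
  have hSpos : 0 < S := by positivity
  set c : ℝ := α ^ ((d : ℝ) / 2) * ((2 * Real.pi * γ) ^ (-(d : ℝ) / 2)
      * Real.exp (-(4 * α / γ) * S)) with hc
  set A : Set Ω := {ω | r ≤ ‖Z ω - xstar‖} with hAdef
  have hmeasA : MeasurableSet A :=
    hZ ((isClosed_le continuous_const ((continuous_id.sub continuous_const).norm)).measurableSet)
  have hAc : Aᶜ = Z ⁻¹' (Metric.ball xstar r) := by
    ext ω
    simp [hAdef, Metric.mem_ball, dist_eq_norm, not_le]
  -- density lower bound on the ball
  have hdens : ∀ y ∈ Metric.ball xstar r,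
      c ≤ (2 * Real.pi * σ2) ^ (-(d : ℝ) / 2) * Real.exp (-‖y - m‖ ^ 2 / (2 * σ2)) := by
    intro y hy
    rw [Metric.mem_ball, dist_eq_norm] at hy
    have hγσ : γ ≤ 2 * α * σ2 := by
      rw [div_le_iff₀ (by positivity)] at hσl; linarith
    have hnorm : ‖y - m‖ ^ 2 ≤ 2 * S := by
      have h1 : ‖y - m‖ ≤ ‖y - xstar‖ + ‖xstar - m‖ := norm_sub_le_norm_sub_add_norm_sub y xstar m
      have h2 : ‖xstar - m‖ = ‖m - xstar‖ := norm_sub_rev _ _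
      have h3 : ‖y - m‖ ≤ r + ‖m - xstar‖ := by rw [h2] at h1; linarith
      have h0 : 0 ≤ ‖y - m‖ := norm_nonneg _
      rw [hS]
      nlinarith [sq_nonneg (r - ‖m - xstar‖), norm_nonneg (m - xstar), hr.le]
    have hexp : Real.exp (-(4 * α / γ) * S) ≤ Real.exp (-‖y - m‖ ^ 2 / (2 * σ2)) := by
      rw [Real.exp_le_exp]
      rw [neg_div, neg_mul, neg_le_neg_iff]
      rw [div_le_iff₀ (by positivity : (0:ℝ) < 2 * σ2)]
      have h4 : (4 * α / γ) * S * (2 * σ2) = 8 * (α * σ2) * S / γ := by ring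
      rw [h4, le_div_iff₀ hγ]
      nlinarith [mul_le_mul_of_nonneg_right hγσ hSpos.le]
    have hbase : α ^ ((d : ℝ) / 2) * (2 * Real.pi * γ) ^ (-(d : ℝ) / 2)
        ≤ (2 * Real.pi * σ2) ^ (-(d : ℝ) / 2) := by
      have heq : (2 * Real.pi * (γ / α)) ^ (-(d : ℝ) / 2)
          = α ^ ((d : ℝ) / 2) * (2 * Real.pi * γ) ^ (-(d : ℝ) / 2) := by
        rw [show 2 * Real.pi * (γ / α) = (2 * Real.pi * γ) / α by ring,
          Real.div_rpow (by positivity) hα.le, div_eq_mul_inv,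
          ← Real.rpow_neg hα.le, show -(-(d : ℝ) / 2) = (d : ℝ) / 2 by ring, mul_comm]
      have hle : 2 * Real.pi * σ2 ≤ 2 * Real.pi * (γ / α) :=
        mul_le_mul_of_nonneg_left hσu (by positivity)
      have := Real.rpow_le_rpow_of_nonpos (by positivity) hle
        (by rw [neg_div]; exact neg_nonpos.2 (by positivity) : -(d : ℝ) / 2 ≤ 0)
      linarith [heq ▸ this]
    calc c = (α ^ ((d : ℝ) / 2) * (2 * Real.pi * γ) ^ (-(d : ℝ) / 2))
            * Real.exp (-(4 * α / γ) * S) := by rw [hc]; ring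
      _ ≤ (2 * Real.pi * σ2) ^ (-(d : ℝ) / 2) * Real.exp (-‖y - m‖ ^ 2 / (2 * σ2)) :=
          mul_le_mul hbase hexp (Real.exp_pos _).le (by positivity)
  -- measure of the complement
  haveI : Nontrivial (EuclideanSpace ℝ (Fin d)) :=
    Module.nontrivial_of_finrank_pos (R := ℝ)
      (by rw [finrank_euclideanSpace_fin]; omega)
  have hvolball : volume (Metric.ball xstar r)
      = ENNReal.ofReal (r ^ d) * volume (Metric.ball (0 : EuclideanSpace ℝ (Fin d)) 1) := by
    rw [Measure.addHaar_ball volume xstar hr.le]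
    simp
  have hPAc : ENNReal.ofReal c * (ENNReal.ofReal (r ^ d)
      * volume (Metric.ball (0 : EuclideanSpace ℝ (Fin d)) 1)) ≤ P Aᶜ := by
    rw [hAc, ← Measure.map_apply hZ measurableSet_ball, hlaw, gaussianE,
      withDensity_apply _ measurableSet_ball]
    calc ENNReal.ofReal c * (ENNReal.ofReal (r ^ d)
          * volume (Metric.ball (0 : EuclideanSpace ℝ (Fin d)) 1))
        = ENNReal.ofReal c * volume (Metric.ball xstar r) := by rw [hvolball]
      _ = ∫⁻ _ in Metric.ball xstar r, ENNReal.ofReal c := (setLIntegral_const _ _).symm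
      _ ≤ ∫⁻ y in Metric.ball xstar r,
            ENNReal.ofReal ((2 * Real.pi * σ2) ^ (-(d : ℝ) / 2)
              * Real.exp (-‖y - m‖ ^ 2 / (2 * σ2))) := by
          apply setLIntegral_mono
          · apply Measurable.ennreal_ofReal
            fun_prop
          · intro y hy
            exact ENNReal.ofReal_le_ofReal (hdens y hy)
  have hPAcfin : P Aᶜ ≠ ⊤ := measure_ne_top P _
  have hPAc' : c * r ^ d * (volume (Metric.ball (0 : EuclideanSpace ℝ (Fin d)) 1)).toReal
      ≤ (P Aᶜ).toReal := by
    have := ENNReal.toReal_mono hPAcfin hPAc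
    rw [ENNReal.toReal_mul, ENNReal.toReal_mul, ENNReal.toReal_ofReal (by positivity : (0:ℝ) ≤ c),
      ENNReal.toReal_ofReal (by positivity : (0:ℝ) ≤ r ^ d)] at this
    linarith
  -- combine
  have hsplit : (P A).toReal = 1 - (P Aᶜ).toReal := by
    have h1 : P Aᶜ = 1 - P A := prob_compl_eq_one_sub hmeasA
    have h2 : (P Aᶜ).toReal = 1 - (P A).toReal := by
      rw [h1, ENNReal.toReal_sub_of_le prob_le_one ENNReal.one_ne_top, ENNReal.toReal_one]
    linarith
  rw [hsplit]
  have hsq : (r * Real.sqrt α) ^ d = r ^ d * α ^ ((d : ℝ) / 2) := by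
    rw [mul_pow]
    congr 1
    rw [← Real.rpow_natCast (Real.sqrt α) d, Real.sqrt_eq_rpow, ← Real.rpow_mul hα.le]
    congr 1
    ring
  have : (volume (Metric.ball (0 : EuclideanSpace ℝ (Fin d)) 1)).toReal
      * (r * Real.sqrt α) ^ d * (2 * Real.pi * γ) ^ (-(d : ℝ) / 2)
      * Real.exp (-(4 * α / γ) * S)
      = c * r ^ d * (volume (Metric.ball (0 : EuclideanSpace ℝ (Fin d)) 1)).toReal := by
    rw [hsq, hc]; ring
  rw [hS] at this
  linarith [this ▸ hPAc']
end

section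
/- Let Z_1, …, Z_q be i.i.d. ℝ^d-valued random vectors with E‖Z_1‖² < ∞, let x* ∈ ℝ^d and r > 0. Then E[ min_{1 ≤ i ≤ q} ‖Z_i − x*‖ ] ≤ r + (E‖Z_1 − x*‖²)^{1/2} · P(‖Z_1 − x*‖ > r)^{q/2}. -/
open MeasureTheory Real Set

/-- bound on the expected minimum distance of `q` i.i.d. random vectors
to a point: `E[min_i ‖Z_i − x*‖] ≤ r + (E‖Z_1 − x*‖²)^{1/2} P(‖Z_1 − x*‖ > r)^{q/2}`. -/
theorem stmt18 {d : ℕ} (q : ℕ) (hq : 0 < q)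
    (Ω : Type) [MeasurableSpace Ω] (P : Measure Ω) [IsProbabilityMeasure P]
    (Z : Fin q → Ω → EuclideanSpace ℝ (Fin d))
    (hmeas : ∀ i, Measurable (Z i))
    (hindep : ProbabilityTheory.iIndepFun Z P)
    (hident : ∀ i : Fin q, P.map (Z i) = P.map (Z ⟨0, hq⟩))
    (hL2 : Integrable (fun ω => ‖Z ⟨0, hq⟩ ω‖ ^ 2) P)
    (xstar : EuclideanSpace ℝ (Fin d)) (r : ℝ) (hr : 0 < r) :
    ∫ ω, (⨅ i : Fin q, ‖Z i ω - xstar‖) ∂P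
      ≤ r + Real.sqrt (∫ ω, ‖Z ⟨0, hq⟩ ω - xstar‖ ^ 2 ∂P)
          * ((P {ω | r < ‖Z ⟨0, hq⟩ ω - xstar‖}).toReal) ^ ((q : ℝ) / 2) := by
  set i0 : Fin q := ⟨0, hq⟩
  haveI : Nonempty (Fin q) := ⟨i0⟩
  -- the "bad" set where all distances exceed r
  set s : Set (EuclideanSpace ℝ (Fin d)) := {x | r < ‖x - xstar‖} with hs_def
  have hs_meas : MeasurableSet s :=
    measurableSet_lt measurable_const ((measurable_id.sub_const xstar).norm)
  set A : Set Ω := ⋂ i : Fin q, Z i ⁻¹' s with hA_def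
  have hA_meas : MeasurableSet A :=
    MeasurableSet.iInter fun i => (hmeas i) hs_meas
  -- the distance functions
  set f : Ω → ℝ := fun ω => ‖Z i0 ω - xstar‖ with hf_def
  have hf_meas : Measurable f := ((hmeas i0).sub_const xstar).norm
  have hf_nonneg : ∀ ω, 0 ≤ f ω := fun ω => norm_nonneg _
  -- f is in L²
  have hf_mem2 : MemLp f 2 P := by
    have hZ2 : MemLp (Z i0) 2 P := by
      rw [memLp_two_iff_integrable_sq_norm (hmeas i0).aestronglyMeasurable]
      exact hL2
    exact ((hZ2.sub (memLp_const xstar)).norm)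
  have hf_int : Integrable f P := hf_mem2.integrable one_le_two
  -- the indicator function
  set g : Ω → ℝ := A.indicator (fun _ => (1 : ℝ)) with hg_def
  have hg_mem2 : MemLp g 2 P :=
    (memLp_indicator_const 2 hA_meas (1 : ℝ) (Or.inr (measure_ne_top P A)))
  have hg_nonneg : ∀ ω, 0 ≤ g ω := fun ω => Set.indicator_nonneg (fun _ _ => zero_le_one) ω
  -- pointwise bound: inf ≤ r + f * g
  have hpt : ∀ ω, (⨅ i : Fin q, ‖Z i ω - xstar‖) ≤ r + f ω * g ω := by
    intro ω
    have hbdd : BddBelow (Set.range fun i : Fin q => ‖Z i ω - xstar‖) :=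
      ⟨0, by rintro x ⟨i, rfl⟩; exact norm_nonneg _⟩
    by_cases hω : ω ∈ A
    · have : g ω = 1 := Set.indicator_of_mem hω _
      rw [this, mul_one]
      calc (⨅ i : Fin q, ‖Z i ω - xstar‖) ≤ ‖Z i0 ω - xstar‖ := ciInf_le hbdd i0
        _ ≤ r + f ω := by simp [hf_def]; linarith [hr]
    · rw [hA_def, Set.mem_iInter] at hω
      push_neg at hω
      obtain ⟨i, hi⟩ := hω
      have hi' : ‖Z i ω - xstar‖ ≤ r := le_of_not_gt hi
      have hωA : ω ∉ A := fun h => hi (Set.mem_iInter.mp h i)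
      have : g ω = 0 := Set.indicator_of_notMem hωA _
      rw [this, mul_zero, add_zero]
      exact le_trans (ciInf_le hbdd i) hi'
  -- integrability of the infimum
  have hinf_meas : Measurable fun ω => ⨅ i : Fin q, ‖Z i ω - xstar‖ :=
    Measurable.iInf fun i => ((hmeas i).sub_const xstar).norm
  have hinf_int : Integrable (fun ω => ⨅ i : Fin q, ‖Z i ω - xstar‖) P := by
    refine hf_int.mono hinf_meas.aestronglyMeasurable (ae_of_all _ fun ω => ?_)
    have hbdd : BddBelow (Set.range fun i : Fin q => ‖Z i ω - xstar‖) :=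
      ⟨0, by rintro x ⟨i, rfl⟩; exact norm_nonneg _⟩
    have h1 : (⨅ i : Fin q, ‖Z i ω - xstar‖) ≤ f ω := ciInf_le hbdd i0
    have h2 : 0 ≤ ⨅ i : Fin q, ‖Z i ω - xstar‖ :=
      le_ciInf fun i => norm_nonneg _
    rw [Real.norm_of_nonneg h2, Real.norm_of_nonneg (hf_nonneg ω)]
    exact h1
  -- integrability of f * g
  have hfg_int : Integrable (fun ω => f ω * g ω) P := by
    refine hf_int.mono (hf_mem2.aestronglyMeasurable.mul hg_mem2.aestronglyMeasurable)
      (ae_of_all _ fun ω => ?_)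
    rw [Real.norm_of_nonneg (mul_nonneg (hf_nonneg ω) (hg_nonneg ω)),
      Real.norm_of_nonneg (hf_nonneg ω)]
    calc f ω * g ω ≤ f ω * 1 := by
          refine mul_le_mul_of_nonneg_left ?_ (hf_nonneg ω)
          exact Set.indicator_le_self' (fun _ _ => zero_le_one) ω
      _ = f ω := mul_one _
  -- step 1: integrate the pointwise bound
  have step1 : ∫ ω, (⨅ i : Fin q, ‖Z i ω - xstar‖) ∂P ≤ r + ∫ ω, f ω * g ω ∂P := by
    have : ∫ ω, (r + f ω * g ω) ∂P = r + ∫ ω, f ω * g ω ∂P := by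
      rw [integral_add (integrable_const r) hfg_int, integral_const]
      simp
    rw [← this]
    exact integral_mono hinf_int ((integrable_const r).add hfg_int) hpt
  -- step 2: Cauchy–Schwarz
  have step2 : ∫ ω, f ω * g ω ∂P
      ≤ (∫ ω, f ω ^ (2 : ℝ) ∂P) ^ ((1 : ℝ) / 2) * (∫ ω, g ω ^ (2 : ℝ) ∂P) ^ ((1 : ℝ) / 2) := by
    have hconj : Real.HolderConjugate 2 2 := by constructor <;> norm_num
    have := integral_mul_le_Lp_mul_Lq_of_nonneg hconj (ae_of_all _ hf_nonneg)
      (ae_of_all _ hg_nonneg) (by simpa using hf_mem2) (by simpa using hg_mem2)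
    simpa using this
  -- compute ∫ g² = P(A)
  have hg_sq : ∫ ω, g ω ^ (2 : ℝ) ∂P = (P A).toReal := by
    have : ∀ ω, g ω ^ (2 : ℝ) = g ω := by
      intro ω
      by_cases hω : ω ∈ A
      · simp [hg_def, Set.indicator_of_mem hω]
      · simp [hg_def, Set.indicator_of_notMem hω]
    rw [integral_congr_ae (ae_of_all _ this), hg_def, integral_indicator_const _ hA_meas]
    simp [measureReal_def]
  -- P(A) = p^q by independence and identical distribution
  have hPA : P A = (P {ω | r < ‖Z i0 ω - xstar‖}) ^ q := by
    have hkey := hindep.measure_inter_preimage_eq_mul (S := Finset.univ)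
      (sets := fun _ => s) (fun i _ => hs_meas)
    have hA_eq : A = ⋂ i ∈ Finset.univ, Z i ⁻¹' s := by
      simp [hA_def]
    rw [hA_eq, hkey]
    have heach : ∀ i : Fin q, P (Z i ⁻¹' s) = P (Z i0 ⁻¹' s) := by
      intro i
      rw [← Measure.map_apply (hmeas i) hs_meas, ← Measure.map_apply (hmeas i0) hs_meas,
        hident i]
    have : P (Z i0 ⁻¹' s) = P {ω | r < ‖Z i0 ω - xstar‖} := rfl
    rw [Finset.prod_congr rfl (fun i _ => heach i)]
    simp [this]
  -- put everything together
  set p : ℝ := (P {ω | r < ‖Z i0 ω - xstar‖}).toReal with hp_def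
  have hp_nonneg : 0 ≤ p := ENNReal.toReal_nonneg
  have hPA_toReal : (P A).toReal = p ^ q := by
    rw [hPA, ENNReal.toReal_pow]
  have hf_sq : ∫ ω, f ω ^ (2 : ℝ) ∂P = ∫ ω, ‖Z i0 ω - xstar‖ ^ 2 ∂P := by
    refine integral_congr_ae (ae_of_all _ fun ω => ?_)
    rw [hf_def]
    exact_mod_cast Real.rpow_natCast _ 2
  have hfsq_nonneg : 0 ≤ ∫ ω, ‖Z i0 ω - xstar‖ ^ 2 ∂P :=
    integral_nonneg fun ω => sq_nonneg _
  calc ∫ ω, (⨅ i : Fin q, ‖Z i ω - xstar‖) ∂P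
      ≤ r + ∫ ω, f ω * g ω ∂P := step1
    _ ≤ r + (∫ ω, f ω ^ (2 : ℝ) ∂P) ^ ((1 : ℝ) / 2) * (∫ ω, g ω ^ (2 : ℝ) ∂P) ^ ((1 : ℝ) / 2) :=
        by linarith [step2]
    _ = r + Real.sqrt (∫ ω, ‖Z i0 ω - xstar‖ ^ 2 ∂P) * p ^ ((q : ℝ) / 2) := by
        rw [hf_sq, hg_sq, hPA_toReal, Real.sqrt_eq_rpow]
        congr 1
        congr 1
        rw [← Real.rpow_natCast p q, ← Real.rpow_mul hp_nonneg]
        congr 1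
        ring
end
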